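/- arXiv:1010.0424 — 4 statements merged into one kernel-verified Lean document; each statement's English description precedes it below -/
import Mathlib

section
/- For each s with 1 ≤ s ≤ 4, the full team F_s consisting of all polyominoes of size s is a winner in the weak (1,2)-achievement game; moreover, the maker has a strategy guaranteeing that after his s-th mark his s marked cells form a connected set (and hence a polyomino of size s). -/
/-- A cell of the rectangular board. -/
abbrev Cell : Type := ℤ × ℤ

/-- Two cells are adjacent if they differ by (±1,0) or (0,±1). -/
def Adjacent (a b : Cell) : Prop :=
  (a.1 - b.1).natAbs + (a.2 - b.2).natAbs = 1

/-- A polyomino is a nonempty subset of ℤ² connected through adjacent cells. -/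
def IsPolyomino (P : Set Cell) : Prop :=
  P.Nonempty ∧ ∀ a ∈ P, ∀ b ∈ P,
    Relation.ReflTransGen (fun x y => x ∈ P ∧ y ∈ P ∧ Adjacent x y) a b

/-- Symmetries of the board: compositions of an integer translation with one of the
eight signed/swap linear maps (rotations by multiples of 90° and reflections). -/
def IsSym (f : Cell → Cell) : Prop :=
  ∃ (t : Cell) (a b s : Bool), ∀ p : Cell,
    f p = (t.1 + (if a then (if s then p.2 else p.1) else -(if s then p.2 else p.1)),
           t.2 + (if b then (if s then p.1 else p.2) else -(if s then p.1 else p.2)))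

/-- Two subsets of ℤ² are congruent if one is the image of the other under a symmetry. -/
def CellCongruent (A B : Set Cell) : Prop := ∃ f, IsSym f ∧ f '' A = B

/-- `Ancestor P Q` (written P ⊑ Q): `Q` contains a subset congruent to `P`. -/
def Ancestor (P Q : Set Cell) : Prop := ∃ S, S ⊆ Q ∧ CellCongruent P S

/-- `Simpler S T` (written S ⪯ T): every member of `T` has an ancestor in `S`. -/
def Simpler (S T : Set (Set Cell)) : Prop := ∀ Q ∈ T, ∃ P ∈ S, Ancestor P Q

/-- A team: a set of polyominoes no member of which is an ancestor of another member. -/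
def IsTeam (F : Set (Set Cell)) : Prop :=
  (∀ P ∈ F, IsPolyomino P) ∧ ∀ P ∈ F, ∀ Q ∈ F, P ≠ Q → ¬ Ancestor P Q

/-- The cells marked so far, given the list of the maker's moves and
the list of the breaker's (pairs of) moves. -/
def markedCells (ms : List Cell) (bs : List (Cell × Cell)) : Set Cell :=
  {c | c ∈ ms ∨ ∃ p ∈ bs, c = p.1 ∨ c = p.2}

/-- Maker strategy: from the maker's past moves and the breaker's past moves,
produce the maker's next mark. -/
abbrev MStrategy := List Cell → List (Cell × Cell) → Cell

/-- Breaker strategy: from the maker's moves so far (including his latest one) and the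
breaker's past moves, produce the breaker's next two marks. -/
abbrev BStrategy := List Cell → List (Cell × Cell) → Cell × Cell

/-- A legal maker strategy always marks a previously unmarked cell. -/
def MLegal (σ : MStrategy) : Prop := ∀ ms bs, σ ms bs ∉ markedCells ms bs

/-- A legal breaker strategy always marks two distinct previously unmarked cells. -/
def BLegal (τ : BStrategy) : Prop :=
  ∀ ms bs, (τ ms bs).1 ≠ (τ ms bs).2 ∧
    (τ ms bs).1 ∉ markedCells ms bs ∧ (τ ms bs).2 ∉ markedCells ms bs

/-- The lists of moves after `n` full rounds of the weak (1,2)-achievement game,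
the maker moving first in each round. -/
def play (σ : MStrategy) (τ : BStrategy) : ℕ → List Cell × List (Cell × Cell)
  | 0 => ([], [])
  | n + 1 =>
      let p := play σ τ n
      let mv := σ p.1 p.2
      (p.1 ++ [mv], p.2 ++ [τ (p.1 ++ [mv]) p.2])

/-- The set of cells marked by the maker during the first `n` rounds. -/
def makerSet (σ : MStrategy) (τ : BStrategy) (n : ℕ) : Set Cell :=
  {c | c ∈ (play σ τ n).1}

/-- The maker achieves `F` in the play of `σ` against `τ`: at some finite stage his
marked cells contain a subset congruent to a member of `F`. -/
def Achieves (F : Set (Set Cell)) (σ : MStrategy) (τ : BStrategy) : Prop :=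
  ∃ n, ∃ Q ∈ F, Ancestor Q (makerSet σ τ n)

/-- A (bounded) set of polyominoes is a winner of the weak (1,2)-achievement game if the
maker has a legal strategy achieving it against every legal breaker strategy. -/
def GameWinner (F : Set (Set Cell)) : Prop :=
  ∃ σ, MLegal σ ∧ ∀ τ, BLegal τ → Achieves F σ τ

/-- A set of polyominoes is bounded if all its members are finite. -/
def Bounded (F : Set (Set Cell)) : Prop := ∀ P ∈ F, P.Finite

/-- `G` is a bounded restriction of `T`: `G = {F_P : P ∈ T}` for a choice of a finite
polyomino ancestor `F_P ⊑ P` for each `P ∈ T`. -/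
def BoundedRestriction (T G : Set (Set Cell)) : Prop :=
  ∃ f : Set Cell → Set Cell,
    (∀ P ∈ T, (f P).Finite ∧ IsPolyomino (f P) ∧ Ancestor (f P) P) ∧ G = f '' T

/-- Winner for a possibly unbounded set of polyominoes: a bounded set is a winner if the
maker can achieve it; an unbounded set is a winner if every bounded restriction is. -/
def Winner (F : Set (Set Cell)) : Prop :=
  (Bounded F ∧ GameWinner F) ∨
  (¬ Bounded F ∧ ∀ G, BoundedRestriction F G → GameWinner G)

/-- The skinny polyomino `S_n`: `n` cells in a horizontal row. -/
def Srow (n : ℕ) : Set Cell := {p | 0 ≤ p.1 ∧ p.1 < (n : ℤ) ∧ p.2 = 0}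

/-- The one-way infinite skinny polyomino `S_∞`. -/
def Sinf : Set Cell := {p | 0 ≤ p.1 ∧ p.2 = 0}

/-- The L-tromino `L_2`. -/
def L2 : Set Cell := {(0, 0), (1, 0), (1, 1)}

/-- The L-tetromino `L_3`. -/
def L3 : Set Cell := {(0, 0), (1, 0), (2, 0), (2, 1)}

/-- The T-tetromino `T_2`. -/
def T2 : Set Cell := {(0, 0), (1, 0), (2, 0), (1, 1)}

/-- The 2×2 square tetromino `C_2`. -/
def C2 : Set Cell := {(0, 0), (1, 0), (0, 1), (1, 1)}

/-- The S-tetromino `Z_2`. -/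
def Z2 : Set Cell := {(0, 0), (1, 0), (1, 1), (2, 1)}

/-- `C_n`: a horizontal row of `n` cells plus the cells above its two end cells. -/
def Cpoly (n : ℕ) : Set Cell :=
  {p | 0 ≤ p.1 ∧ p.1 < (n : ℤ) ∧ p.2 = 0} ∪ {(0, 1), ((n : ℤ) - 1, 1)}

/-- `Z_n`: a horizontal row of `n` cells plus the cell above one end cell and the cell
below the other end cell. -/
def Zpoly (n : ℕ) : Set Cell :=
  {p | 0 ≤ p.1 ∧ p.1 < (n : ℤ) ∧ p.2 = 0} ∪ {(0, 1), ((n : ℤ) - 1, -1)}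

/-- A polyomino is skinny if all its cells lie in one row or one column. -/
def Skinny (P : Set Cell) : Prop :=
  (∃ r, ∀ p ∈ P, p.2 = r) ∨ (∃ c, ∀ p ∈ P, p.1 = c)

/-- A 2-paving: an irreflexive symmetric relation on cells in which every cell is
related to at most two other cells. -/
def TwoPaving (R : Cell → Cell → Prop) : Prop :=
  (∀ a, ¬ R a a) ∧ (∀ a b, R a b → R b a) ∧
  ∀ a, ∃ b c, ∀ d, R a d → d = b ∨ d = c

/-- The paving strategy based on `R`: a legal breaker strategy that marks every currently
unmarked cell related by `R` to the maker's last move. -/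
def PavingStrategy (R : Cell → Cell → Prop) (τ : BStrategy) : Prop :=
  BLegal τ ∧ ∀ ms bs, ∀ last ∈ ms.getLast?, ∀ c, R last c →
    c ∉ markedCells ms bs → (c = (τ ms bs).1 ∨ c = (τ ms bs).2)

/-- `Q` is killed by `R`: every subset of ℤ² congruent to `Q` contains two related cells. -/
def Killed (R : Cell → Cell → Prop) (Q : Set Cell) : Prop :=
  ∀ S : Set Cell, CellCongruent Q S → ∃ a ∈ S, ∃ b ∈ S, R a b

/-- The unbounded team `W = {S_∞, T_2} ∪ {C_n : n ≥ 2} ∪ {Z_n : n ≥ 2}`. -/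
def Wteam : Set (Set Cell) :=
  {Sinf, T2} ∪ {P | ∃ n, 2 ≤ n ∧ P = Cpoly n} ∪ {P | ∃ n, 2 ≤ n ∧ P = Zpoly n}

namespace S2

def nbrs (c : Cell) : List Cell := [(c.1+1,c.2),(c.1-1,c.2),(c.1,c.2+1),(c.1,c.2-1)]

def allMarked (ms : List Cell) (bs : List (Cell × Cell)) : List Cell :=
  ms ++ bs.flatMap (fun p => [p.1, p.2])

def cands (ms : List Cell) : List Cell :=
  (ms.flatMap nbrs).filter (fun c => c ∉ ms)

def fresh (l : List Cell) : Cell :=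
  (((l.map fun p => p.1.natAbs).foldr max 0 : ℕ) + 1, 0)

def sig : MStrategy := fun ms bs =>
  match (cands ms).filter (fun c => c ∉ allMarked ms bs) with
  | c :: _ => c
  | [] => fresh (allMarked ms bs)

lemma mem_markedCells (c : Cell) (ms : List Cell) (bs : List (Cell × Cell)) :
    c ∈ markedCells ms bs ↔ c ∈ allMarked ms bs := by
  simp [markedCells, allMarked, List.mem_append, List.mem_flatMap]

lemma le_fold (l : List Cell) : ∀ p ∈ l, p.1.natAbs ≤ (l.map fun p => p.1.natAbs).foldr max 0 := by
  induction l with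
  | nil => simp
  | cons a t ih =>
    intro p hp
    have he : (List.map (fun p => p.1.natAbs) (a :: t)).foldr max 0
        = max a.1.natAbs ((t.map fun p => p.1.natAbs).foldr max 0) := by simp
    rw [he]
    rcases List.mem_cons.mp hp with h | h
    · subst h; omega
    · have := ih p h; omega

lemma fresh_not_mem (l : List Cell) : fresh l ∉ l := by
  intro h
  have h2 := le_fold l _ h
  simp only [fresh, Int.natAbs_natCast] at h2
  omega

lemma sig_legal : MLegal sig := by
  intro ms bs hmem0
  have hmem : sig ms bs ∈ allMarked ms bs := (mem_markedCells _ _ _).mp hmem0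
  revert hmem
  unfold sig
  split
  next c t heq =>
    have hm : c ∈ (cands ms).filter (fun c => c ∉ allMarked ms bs) := by
      rw [heq]; exact List.mem_cons_self
    simp only [List.mem_filter, decide_eq_true_eq] at hm
    exact fun h => hm.2 h
  next heq => exact fun h => fresh_not_mem _ h

lemma sig_step (ms : List Cell) (bs : List (Cell × Cell))
    (h : ∃ c ∈ cands ms, c ∉ allMarked ms bs) :
    sig ms bs ∈ cands ms ∧ sig ms bs ∉ allMarked ms bs := by
  obtain ⟨c, hc, hcm⟩ := h
  have hmem : c ∈ (cands ms).filter (fun c => c ∉ allMarked ms bs) := by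
    simp only [List.mem_filter, decide_eq_true_eq]; exact ⟨hc, hcm⟩
  unfold sig
  split
  next a t heq =>
    have hm : a ∈ (cands ms).filter (fun c => c ∉ allMarked ms bs) := by
      rw [heq]; exact List.mem_cons_self
    simpa only [List.mem_filter, decide_eq_true_eq] using hm
  next heq => rw [heq] at hmem; simp at hmem

lemma exists_unmarked (ms : List Cell) (bs : List (Cell × Cell))
    (h : (bs.flatMap fun p => [p.1, p.2]).length < (cands ms).dedup.length) :
    ∃ c ∈ cands ms, c ∉ allMarked ms bs := by
  by_contra hx
  push_neg at hx
  have hsub : (cands ms).dedup ⊆ (bs.flatMap fun p => [p.1, p.2]) := by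
    intro c hc
    have hc' : c ∈ cands ms := List.mem_dedup.mp hc
    have h2 := hx c hc'
    have h3 : c ∉ ms := by
      have := hc'
      simp only [cands, List.mem_filter, decide_eq_true_eq] at this
      exact this.2
    simp only [allMarked, List.mem_append] at h2
    tauto
  have := List.Subperm.length_le ((List.nodup_dedup _).subperm hsub)
  omega

lemma adjacent_symm {a b : Cell} (h : Adjacent a b) : Adjacent b a := by
  unfold Adjacent at *
  omega

lemma adj_of_mem_nbrs {c d : Cell} (h : c ∈ nbrs d) : Adjacent c d := by
  simp only [nbrs, List.mem_cons, List.not_mem_nil, or_false] at h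
  rcases h with h|h|h|h <;> subst h <;> simp [Adjacent] <;> omega

lemma poly_singleton (a : Cell) : IsPolyomino {x | x ∈ [a]} := by
  refine ⟨⟨a, by simp⟩, ?_⟩
  intro x hx y hy
  simp only [Set.mem_setOf_eq, List.mem_singleton] at hx hy
  subst hx; subst hy; exact Relation.ReflTransGen.refl

lemma poly_snoc {l : List Cell} {c : Cell} (hp : IsPolyomino {x | x ∈ l})
    (hd : ∃ d ∈ l, Adjacent c d) :
    IsPolyomino {x | x ∈ l ++ [c]} := by
  obtain ⟨d, hdl, hadj⟩ := hd
  obtain ⟨hne, hconn⟩ := hp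
  set P : Set Cell := {x | x ∈ l} with hP
  set P' : Set Cell := {x | x ∈ l ++ [c]} with hP'
  have hsub : P ⊆ P' := by intro x hx; simp only [hP, hP', Set.mem_setOf_eq, List.mem_append] at *; tauto
  have hcP' : c ∈ P' := by simp [hP']
  have lift : ∀ {a b : Cell}, Relation.ReflTransGen (fun x y => x ∈ P ∧ y ∈ P ∧ Adjacent x y) a b →
      Relation.ReflTransGen (fun x y => x ∈ P' ∧ y ∈ P' ∧ Adjacent x y) a b :=
    fun h => Relation.ReflTransGen.mono (fun x y (hxy : x ∈ P ∧ y ∈ P ∧ Adjacent x y) => (⟨hsub hxy.1, hsub hxy.2.1, hxy.2.2⟩ : x ∈ P' ∧ y ∈ P' ∧ Adjacent x y)) _ _ h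
  have hsymm : Symmetric (fun x y : Cell => x ∈ P' ∧ y ∈ P' ∧ Adjacent x y) :=
    fun x y hxy => ⟨hxy.2.1, hxy.1, adjacent_symm hxy.2.2⟩
  have hc2 : ∀ b' ∈ l, Relation.ReflTransGen (fun x y => x ∈ P' ∧ y ∈ P' ∧ Adjacent x y) c b' :=
    fun b' hb' => Relation.ReflTransGen.head ⟨hcP', hsub hdl, hadj⟩ (lift (hconn d hdl b' hb'))
  refine ⟨⟨c, hcP'⟩, ?_⟩
  intro a ha b hb
  have ha' : a ∈ l ∨ a = c := by simpa [hP', List.mem_append] using ha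
  have hb' : b ∈ l ∨ b = c := by simpa [hP', List.mem_append] using hb
  rcases ha' with ha'|ha' <;> rcases hb' with hb'|hb'
  · exact lift (hconn a ha' b hb')
  · subst hb'; haveI : Std.Symm (fun x y : Cell => x ∈ P' ∧ y ∈ P' ∧ Adjacent x y) := ⟨hsymm⟩; exact (Relation.ReflTransGen.stdSymm (r := fun x y : Cell => x ∈ P' ∧ y ∈ P' ∧ Adjacent x y)).symm _ _ (hc2 a ha')
  · subst ha'; exact hc2 b hb'
  · subst ha'; subst hb'; exact Relation.ReflTransGen.refl

lemma snoc_good {l : List Cell} {c : Cell} (h : c ∈ cands l) (hn : l.Nodup)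
    (hp : IsPolyomino {x | x ∈ l}) :
    (l ++ [c]).Nodup ∧ IsPolyomino {x | x ∈ l ++ [c]} := by
  have h1 : c ∈ l.flatMap nbrs ∧ c ∉ l := by
    simpa only [cands, List.mem_filter, decide_eq_true_eq] using h
  obtain ⟨d, hdl, hnb⟩ := List.mem_flatMap.mp h1.1
  constructor
  · simp [List.nodup_append, hn, h1.2]; exact fun a b hab heq => h1.2 (heq ▸ hab)
  · exact poly_snoc hp ⟨d, hdl, adj_of_mem_nbrs hnb⟩

lemma chain4 {a b c d : Cell} (h2 : b ∈ cands [a]) (h3 : c ∈ cands [a,b]) (h4 : d ∈ cands [a,b,c]) :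
    ([a].Nodup ∧ IsPolyomino {x | x ∈ [a]}) ∧
    ([a,b].Nodup ∧ IsPolyomino {x | x ∈ [a,b]}) ∧
    ([a,b,c].Nodup ∧ IsPolyomino {x | x ∈ [a,b,c]}) ∧
    ([a,b,c,d].Nodup ∧ IsPolyomino {x | x ∈ [a,b,c,d]}) := by
  have g1 : ([a].Nodup ∧ IsPolyomino {x | x ∈ [a]}) := ⟨by simp, poly_singleton a⟩
  have g2 := snoc_good h2 g1.1 g1.2
  have g3 := snoc_good h3 g2.1 g2.2
  have g4 := snoc_good h4 g3.1 g3.2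
  exact ⟨g1, g2, g3, g4⟩


lemma blen1 (u : Cell × Cell) : ([u].flatMap fun p => [p.1,p.2]).length = 2 := rfl
lemma blen2 (u v : Cell × Cell) : ([u,v].flatMap fun p => [p.1,p.2]).length = 4 := rfl
lemma blen3 (u v w : Cell × Cell) : ([u,v,w].flatMap fun p => [p.1,p.2]).length = 6 := rfl

lemma key (τ : BStrategy) (s : ℕ) (h1 : 1 ≤ s) (h4 : s ≤ 4) :
    ((play sig τ s).1).Nodup ∧ ((play sig τ s).1).length = s ∧
      IsPolyomino {x | x ∈ (play sig τ s).1} := by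
  -- stage 1
  have hm1 : sig [] [] = ((1:ℤ),(0:ℤ)) := by decide
  have f1 : (play sig τ 1).1 = [((1:ℤ),(0:ℤ))] := by simp [play, hm1]
  have s1 : (play sig τ 1).2 = [τ [((1:ℤ),(0:ℤ))] []] := by simp [play, hm1]
  have hblen1 : ((play sig τ 1).2.flatMap fun p => [p.1,p.2]).length = 2 := by
    rw [s1]; exact blen1 _
  have hlt1 : ((play sig τ 1).2.flatMap fun p => [p.1,p.2]).length
      < (cands (play sig τ 1).1).dedup.length := by
    rw [hblen1, f1]; decide
  obtain ⟨h2c, h2m⟩ := sig_step _ _ (exists_unmarked _ _ hlt1)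
  rw [f1, s1] at h2c
  have h2c' := h2c
  rw [(by decide : cands [((1:ℤ),(0:ℤ))] = [(2,0),(0,0),(1,1),(1,-1)])] at h2c'
  simp only [List.mem_cons, List.not_mem_nil, or_false] at h2c'
  rcases h2c' with hm2|hm2|hm2|hm2 <;>
  · -- stage 2 generic block
    have f2 : (play sig τ 2).1 = (play sig τ 1).1 ++ [sig (play sig τ 1).1 (play sig τ 1).2] := rfl
    have s2 : (play sig τ 2).2 = (play sig τ 1).2
        ++ [τ ((play sig τ 1).1 ++ [sig (play sig τ 1).1 (play sig τ 1).2]) (play sig τ 1).2] := rfl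
    rw [f1, s1] at f2 s2
    rw [hm2] at f2 s2 h2c
    simp only [List.singleton_append, List.cons_append, List.nil_append] at f2 s2
    have hblen2 : ((play sig τ 2).2.flatMap fun p => [p.1,p.2]).length = 4 := by
      rw [s2]; exact blen2 _ _
    have hlt2 : ((play sig τ 2).2.flatMap fun p => [p.1,p.2]).length
        < (cands (play sig τ 2).1).dedup.length := by
      rw [hblen2, f2]; decide
    obtain ⟨h3c, h3m⟩ := sig_step _ _ (exists_unmarked _ _ hlt2)
    rw [f2, s2] at h3c
    have h3c' := h3c
    first
    | rw [(by decide : cands [((1:ℤ),(0:ℤ)),((2:ℤ),(0:ℤ))]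
        = [(0,0),(1,1),(1,-1),(3,0),(2,1),(2,-1)])] at h3c'
    | rw [(by decide : cands [((1:ℤ),(0:ℤ)),((0:ℤ),(0:ℤ))]
        = [(2,0),(1,1),(1,-1),(-1,0),(0,1),(0,-1)])] at h3c'
    | rw [(by decide : cands [((1:ℤ),(0:ℤ)),((1:ℤ),(1:ℤ))]
        = [(2,0),(0,0),(1,-1),(2,1),(0,1),(1,2)])] at h3c'
    | rw [(by decide : cands [((1:ℤ),(0:ℤ)),((1:ℤ),(-1:ℤ))]
        = [(2,0),(0,0),(1,1),(2,-1),(0,-1),(1,-2)])] at h3c'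
    simp only [List.mem_cons, List.not_mem_nil, or_false] at h3c'
    rcases h3c' with hm3|hm3|hm3|hm3|hm3|hm3 <;>
    · -- stage 3 generic block
      have f3 : (play sig τ 3).1 = (play sig τ 2).1 ++ [sig (play sig τ 2).1 (play sig τ 2).2] := rfl
      have s3 : (play sig τ 3).2 = (play sig τ 2).2
          ++ [τ ((play sig τ 2).1 ++ [sig (play sig τ 2).1 (play sig τ 2).2]) (play sig τ 2).2] := rfl
      rw [f2, s2] at f3 s3
      rw [hm3] at f3 s3 h3c
      simp only [List.singleton_append, List.cons_append, List.nil_append] at f3 s3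
      have hblen3 : ((play sig τ 3).2.flatMap fun p => [p.1,p.2]).length = 6 := by
        rw [s3]; exact blen3 _ _ _
      have hlt3 : ((play sig τ 3).2.flatMap fun p => [p.1,p.2]).length
          < (cands (play sig τ 3).1).dedup.length := by
        rw [hblen3, f3]; decide
      obtain ⟨h4c, h4m⟩ := sig_step _ _ (exists_unmarked _ _ hlt3)
      rw [f3, s3] at h4c
      have f4 : (play sig τ 4).1 = (play sig τ 3).1 ++ [sig (play sig τ 3).1 (play sig τ 3).2] := rfl
      rw [f3, s3] at f4
      simp only [List.singleton_append, List.cons_append, List.nil_append] at f4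
      obtain ⟨g1, g2, g3, g4⟩ := chain4 h2c h3c h4c
      interval_cases s
      · rw [f1]; exact ⟨g1.1, rfl, g1.2⟩
      · rw [f2]; exact ⟨g2.1, rfl, g2.2⟩
      · rw [f3]; exact ⟨g3.1, rfl, g3.2⟩
      · rw [f4]; exact ⟨g4.1, rfl, g4.2⟩

end S2

namespace S2

lemma congruent_refl (A : Set Cell) : CellCongruent A A :=
  ⟨id, ⟨((0:ℤ),(0:ℤ)), true, true, false, fun p => by simp⟩, Set.image_id A⟩

end S2


/-- for `1 ≤ s ≤ 4`, the full team of all polyominoes of size `s` is a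
winner; moreover, the maker has a strategy guaranteeing that after his `s`-th mark his
`s` marked cells form a connected set, hence a polyomino of size `s`. -/
theorem stmt2 (s : ℕ) (h1 : 1 ≤ s) (h4 : s ≤ 4) :
    GameWinner {P | IsPolyomino P ∧ P.encard = (s : ℕ∞)} ∧
    ∃ σ, MLegal σ ∧ ∀ τ, BLegal τ →
      IsPolyomino (makerSet σ τ s) ∧ (makerSet σ τ s).encard = (s : ℕ∞) := by
  have main : ∀ τ : BStrategy, IsPolyomino (makerSet S2.sig τ s) ∧
      (makerSet S2.sig τ s).encard = (s : ℕ∞) := by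
    intro τ
    obtain ⟨hn, hl, hp⟩ := S2.key τ s h1 h4
    have hset : makerSet S2.sig τ s = {x | x ∈ (play S2.sig τ s).1} := rfl
    refine ⟨hset ▸ hp, ?_⟩
    rw [hset, show {x | x ∈ (play S2.sig τ s).1}
        = (((play S2.sig τ s).1.toFinset : Finset Cell) : Set Cell) from by
          simp [List.coe_toFinset],
      Set.encard_coe_eq_coe_finsetCard, List.toFinset_card_of_nodup hn, hl]
  constructor
  · refine ⟨S2.sig, S2.sig_legal, fun τ hτ => ⟨s, makerSet S2.sig τ s,
      ⟨(main τ).1, (main τ).2⟩, ?_⟩⟩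
    exact ⟨makerSet S2.sig τ s, subset_rfl, S2.congruent_refl _⟩
  · exact ⟨S2.sig, S2.sig_legal, fun τ _ => main τ⟩
end

section
/- The unbounded team W = {S_∞, T_2} ∪ {C_n : n ≥ 2} ∪ {Z_n : n ≥ 2} is a winner, i.e., every bounded restriction of W is a winner in the weak (1,2)-achievement game. -/
/- ============================================================ -/
/- Auxiliary development for stmt4                               -/
/- ============================================================ -/

namespace Stmt4

open Classical

/-- the map `p ↦ (t.1 + ε·(p₁ or p₂), t.2 + δ·(p₂ or p₁))`. -/
def mySym (t : Cell) (ε δ : ℤ) (s : Bool) : Cell → Cell :=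
  fun p => (t.1 + ε * (if s then p.2 else p.1), t.2 + δ * (if s then p.1 else p.2))

def pm1 (ε : ℤ) : Prop := ε = 1 ∨ ε = -1

lemma isSym_mySym {t ε δ s} (hε : pm1 ε) (hδ : pm1 δ) : IsSym (mySym t ε δ s) := by
  refine ⟨t, ε = 1, δ = 1, s, fun p => ?_⟩
  rcases hε with h1 | h1 <;> rcases hδ with h2 | h2 <;>
    subst h1 <;> subst h2 <;> cases s <;> simp [mySym]

lemma isSym_iff {f : Cell → Cell} :
    IsSym f ↔ ∃ t ε δ s, pm1 ε ∧ pm1 δ ∧ f = mySym t ε δ s := by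
  constructor
  · rintro ⟨t, a, b, s, h⟩
    refine ⟨t, if a then 1 else -1, if b then 1 else -1, s, ?_, ?_, funext fun p => ?_⟩
    · cases a <;> simp [pm1]
    · cases b <;> simp [pm1]
    · rw [h p]; cases a <;> cases b <;> cases s <;> simp [mySym]
  · rintro ⟨t, ε, δ, s, hε, hδ, rfl⟩; exact isSym_mySym hε hδ

lemma pm1_mul {a b : ℤ} (ha : pm1 a) (hb : pm1 b) : pm1 (a*b) := by
  rcases ha with h|h <;> rcases hb with h'|h' <;> subst h <;> subst h' <;> simp [pm1]

lemma isSym_comp {g f : Cell → Cell} (hg : IsSym g) (hf : IsSym f) : IsSym (g ∘ f) := by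
  rw [isSym_iff] at hg hf ⊢
  obtain ⟨t, ε, δ, s, hε, hδ, rfl⟩ := hg
  obtain ⟨u, ε', δ', s', hε', hδ', rfl⟩ := hf
  refine ⟨(t.1 + ε * (if s then u.2 else u.1), t.2 + δ * (if s then u.1 else u.2)),
    if s then ε * δ' else ε * ε', if s then δ * ε' else δ * δ', xor s' s, ?_, ?_,
    funext fun p => ?_⟩
  · cases s
    · simpa using pm1_mul hε hε'
    · simpa using pm1_mul hε hδ'
  · cases s
    · simpa using pm1_mul hδ hδ'
    · simpa using pm1_mul hδ hε'
  · refine Prod.ext ?_ ?_ <;> cases s <;> cases s' <;> simp [mySym, Function.comp] <;> ring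

lemma mySym_adj {t ε δ s} (hε : pm1 ε) (hδ : pm1 δ) {a b : Cell} (h : Adjacent a b) :
    Adjacent (mySym t ε δ s a) (mySym t ε δ s b) := by
  rcases hε with h1|h1 <;> rcases hδ with h2|h2 <;> subst h1 <;> subst h2 <;>
    cases s <;> simp [Adjacent, mySym] at h ⊢ <;> omega

/-- cells in the frame determined by origin `o` and axes `d`, `e`. -/
def pt (o d e : Cell) (i j : ℤ) : Cell :=
  (o.1 + i * d.1 + j * e.1, o.2 + i * d.2 + j * e.2)

def cellAt (o d : Cell) (i : ℤ) : Cell := (o.1 + i * d.1, o.2 + i * d.2)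

lemma pt_zero (o d e : Cell) (i : ℤ) : pt o d e i 0 = cellAt o d i := by
  simp [pt, cellAt]

def IsDir (d : Cell) : Prop := d = (1,0) ∨ d = (-1,0) ∨ d = (0,1) ∨ d = (0,-1)

def rot (d : Cell) : Cell := (-d.2, d.1)

def Frame (d e : Cell) : Prop := IsDir d ∧ IsDir e ∧ d.1 * e.1 + d.2 * e.2 = 0

lemma frame_rot {d : Cell} (h : IsDir d) : Frame d (rot d) := by
  rcases h with h|h|h|h <;> subst h <;> exact ⟨by simp [IsDir], by simp [IsDir, rot], by simp [rot]⟩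

lemma frame_neg_right {d e : Cell} (h : Frame d e) : Frame d (-e) := by
  obtain ⟨h1, h2, h3⟩ := h
  refine ⟨h1, ?_, ?_⟩
  · rcases h2 with h|h|h|h <;> subst h <;> simp [IsDir] <;> tauto
  · simp; linarith

lemma frame_neg_left {d e : Cell} (h : Frame d e) : Frame (-d) e := by
  obtain ⟨h1, h2, h3⟩ := h
  refine ⟨?_, h2, ?_⟩
  · rcases h1 with h|h|h|h <;> subst h <;> simp [IsDir] <;> tauto
  · simp; linarith

lemma frame_swap {d e : Cell} (h : Frame d e) : Frame e d := by
  obtain ⟨h1, h2, h3⟩ := h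
  exact ⟨h2, h1, by linarith⟩

lemma frame_cases {d e : Cell} (h : Frame d e) :
    (d = ((1:ℤ),(0:ℤ)) ∨ d = (-1,0) ∨ d = (0,1) ∨ d = (0,-1)) ∧
    (e = ((1:ℤ),(0:ℤ)) ∨ e = (-1,0) ∨ e = (0,1) ∨ e = (0,-1)) ∧
    (d.1 = 0 → e.2 = 0) ∧ (d.2 = 0 → e.1 = 0) := by
  obtain ⟨h1, h2, h3⟩ := h
  refine ⟨h1, h2, ?_, ?_⟩ <;>
  · rcases h1 with h|h|h|h <;> rcases h2 with h'|h'|h'|h' <;> subst h <;> subst h' <;>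
      simp_all <;> omega

lemma pt_inj {d e : Cell} (h : Frame d e) {o : Cell} {i j i' j' : ℤ}
    (heq : pt o d e i j = pt o d e i' j') : i = i' ∧ j = j' := by
  obtain ⟨h1, h2, h3, h4⟩ := frame_cases h
  rcases h1 with h|h|h|h <;> rcases h2 with h'|h'|h'|h' <;> subst h <;> subst h' <;>
    simp_all [pt, Prod.ext_iff] <;> omega

lemma isSym_pt {d e : Cell} (h : Frame d e) (o : Cell) :
    IsSym (fun q : Cell => pt o d e q.1 q.2) := by
  rw [isSym_iff]
  obtain ⟨hd, he, hor⟩ := h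
  rcases hd with h|h|h|h <;> rcases he with h'|h'|h'|h' <;> subst h <;> subst h' <;>
    simp at hor <;>
  first
  | (refine ⟨o, 1, 1, false, Or.inl rfl, Or.inl rfl, ?_⟩
     funext p; refine Prod.ext ?_ ?_ <;> simp [pt, mySym] <;> omega)
  | (refine ⟨o, 1, -1, false, Or.inl rfl, Or.inr rfl, ?_⟩
     funext p; refine Prod.ext ?_ ?_ <;> simp [pt, mySym] <;> omega)
  | (refine ⟨o, -1, 1, false, Or.inr rfl, Or.inl rfl, ?_⟩
     funext p; refine Prod.ext ?_ ?_ <;> simp [pt, mySym] <;> omega)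
  | (refine ⟨o, -1, -1, false, Or.inr rfl, Or.inr rfl, ?_⟩
     funext p; refine Prod.ext ?_ ?_ <;> simp [pt, mySym] <;> omega)
  | (refine ⟨o, 1, 1, true, Or.inl rfl, Or.inl rfl, ?_⟩
     funext p; refine Prod.ext ?_ ?_ <;> simp [pt, mySym] <;> omega)
  | (refine ⟨o, 1, -1, true, Or.inl rfl, Or.inr rfl, ?_⟩
     funext p; refine Prod.ext ?_ ?_ <;> simp [pt, mySym] <;> omega)
  | (refine ⟨o, -1, 1, true, Or.inr rfl, Or.inl rfl, ?_⟩
     funext p; refine Prod.ext ?_ ?_ <;> simp [pt, mySym] <;> omega)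
  | (refine ⟨o, -1, -1, true, Or.inr rfl, Or.inr rfl, ?_⟩
     funext p; refine Prod.ext ?_ ?_ <;> simp [pt, mySym] <;> omega)

end Stmt4
namespace Stmt4

/- ---------- coordinate lemmas ---------- -/

lemma cellAt_eq_pt (o d e : Cell) (i : ℤ) : cellAt o d i = pt o d e i 0 := by
  simp [pt, cellAt]

lemma pt_arm (o d e : Cell) (t j : ℤ) : cellAt (cellAt o d t) e j = pt o d e t j := by
  refine Prod.ext ?_ ?_ <;> simp only [pt, cellAt] <;> ring

lemma pt_rebase (o d e : Cell) (t i j : ℤ) :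
    pt (cellAt o d t) d e i j = pt o d e (t + i) j := by
  refine Prod.ext ?_ ?_ <;> simp only [pt, cellAt, Prod.fst_neg, Prod.snd_neg] <;> ring

lemma pt_negd (o d e : Cell) (i j : ℤ) : pt o (-d) e i j = pt o d e (-i) j := by
  refine Prod.ext ?_ ?_ <;> simp only [pt, Prod.fst_neg, Prod.snd_neg] <;> ring

lemma pt_nege (o d e : Cell) (i j : ℤ) : pt o d (-e) i j = pt o d e i (-j) := by
  refine Prod.ext ?_ ?_ <;> simp only [pt, Prod.fst_neg, Prod.snd_neg] <;> ring

lemma cellAt_rebase (o d : Cell) (t i : ℤ) : cellAt (cellAt o d t) d i = cellAt o d (t + i) := by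
  refine Prod.ext ?_ ?_ <;> simp only [cellAt, Prod.fst_neg, Prod.snd_neg] <;> ring

lemma cellAt_negd (o d : Cell) (i : ℤ) : cellAt o (-d) i = cellAt o d (-i) := by
  refine Prod.ext ?_ ?_ <;> simp only [cellAt, Prod.fst_neg, Prod.snd_neg] <;> ring

lemma rot_dir {d : Cell} (h : IsDir d) : IsDir (rot d) := (frame_rot h).2.1

/- ---------- segments ---------- -/

def segP (o d : Cell) (n : ℕ) : Set Cell :=
  {c | ∃ i : ℤ, 0 ≤ i ∧ i < (n : ℤ) ∧ c = cellAt o d i}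

lemma mem_segP_of {o d : Cell} {n : ℕ} {i : ℤ} (h0 : 0 ≤ i) (h1 : i < (n:ℤ)) :
    cellAt o d i ∈ segP o d n := ⟨i, h0, h1, rfl⟩

lemma mem_segP_pt {o d e : Cell} (h : Frame d e) {n : ℕ} {i j : ℤ} :
    pt o d e i j ∈ segP o d n ↔ 0 ≤ i ∧ i < (n:ℤ) ∧ j = 0 := by
  constructor
  · rintro ⟨i', h0, h1, heq⟩
    rw [cellAt_eq_pt o d e] at heq
    obtain ⟨rfl, rfl⟩ := pt_inj h heq.symm
    exact ⟨h0, h1, rfl⟩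
  · rintro ⟨h0, h1, rfl⟩
    rw [← cellAt_eq_pt o d e]; exact mem_segP_of h0 h1

lemma segP_succ (o d : Cell) (n : ℕ) :
    segP o d (n+1) = segP o d n ∪ {cellAt o d n} := by
  ext c
  simp only [segP, Set.mem_union, Set.mem_setOf_eq, Set.mem_singleton_iff]
  constructor
  · rintro ⟨i, h0, h1, rfl⟩
    by_cases hi : i = n
    · subst hi; right; rfl
    · left; exact ⟨i, h0, by omega, rfl⟩
  · rintro (⟨i, h0, h1, rfl⟩ | rfl)
    · exact ⟨i, h0, by omega, rfl⟩
    · exact ⟨n, by omega, by omega, rfl⟩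

lemma segP_back (o d : Cell) (n : ℕ) :
    segP (cellAt o d (-1)) d (n+1) = segP o d n ∪ {cellAt o d (-1)} := by
  ext c
  simp only [segP, Set.mem_union, Set.mem_setOf_eq, Set.mem_singleton_iff]
  constructor
  · rintro ⟨i, h0, h1, rfl⟩
    rw [cellAt_rebase]
    by_cases hi : i = 0
    · subst hi; right; simp
    · left; exact ⟨-1 + i, by omega, by omega, rfl⟩
  · rintro (⟨i, h0, h1, rfl⟩ | rfl)
    · exact ⟨i + 1, by omega, by omega, by rw [cellAt_rebase]; ring_nf⟩
    · exact ⟨0, by omega, by omega, by rw [cellAt_rebase]; ring_nf⟩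

lemma segP_rev (o d : Cell) (n : ℕ) (hn : 1 ≤ n) :
    segP (cellAt o d ((n:ℤ) - 1)) (-d) n = segP o d n := by
  ext c
  simp only [segP, Set.mem_setOf_eq]
  constructor
  · rintro ⟨i, h0, h1, rfl⟩
    rw [cellAt_negd, cellAt_rebase]
    exact ⟨(n:ℤ) - 1 + -i, by omega, by omega, rfl⟩
  · rintro ⟨i, h0, h1, rfl⟩
    refine ⟨(n:ℤ) - 1 - i, by omega, by omega, ?_⟩
    rw [cellAt_negd, cellAt_rebase]; ring_nf

lemma segP_one (o d : Cell) : segP o d 1 = {o} := by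
  ext c
  simp only [segP, Set.mem_setOf_eq, Set.mem_singleton_iff]
  constructor
  · rintro ⟨i, h0, h1, rfl⟩
    have : i = 0 := by omega
    subst this; simp [cellAt]
  · rintro rfl; exact ⟨0, by omega, by omega, by simp [cellAt]⟩

lemma segP_two (o d : Cell) : segP o d 1 ∪ {cellAt o d 1} = segP o d 2 := by
  ext c
  simp only [segP, Set.mem_union, Set.mem_setOf_eq, Set.mem_singleton_iff]
  constructor
  · rintro (⟨i, h0, h1, rfl⟩ | rfl)
    · exact ⟨i, h0, by omega, rfl⟩
    · exact ⟨1, by omega, by omega, rfl⟩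
  · rintro ⟨i, h0, h1, rfl⟩
    by_cases hi : i = 1
    · subst hi; right; rfl
    · left; exact ⟨i, h0, by omega, rfl⟩

lemma segP_two_back (o d : Cell) :
    segP o d 1 ∪ {cellAt o d (-1)} = segP (cellAt o d (-1)) d 2 := by
  have := segP_back o d 1
  rw [show (1:ℕ)+1 = 2 from rfl] at this
  rw [this]

lemma segP_subset_succ (o d : Cell) (n : ℕ) : segP o d n ⊆ segP o d (n+1) := by
  rw [segP_succ]; exact Set.subset_union_left

/- ---------- targets and Win ---------- -/

def TL (m : ℕ) : Set (Set Cell) :=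
  {Srow m, T2} ∪ {P | ∃ n, 2 ≤ n ∧ P = Cpoly n} ∪ {P | ∃ n, 2 ≤ n ∧ P = Zpoly n}

def Win (m : ℕ) (M : Set Cell) : Prop := ∃ Q ∈ TL m, Ancestor Q M

lemma ancestor_of_image {P M : Set Cell} {h : Cell → Cell} (hs : IsSym h)
    (him : h '' P ⊆ M) : Ancestor P M := ⟨h '' P, him, h, hs, rfl⟩

lemma win_mono {m : ℕ} {M M' : Set Cell} (h : M ⊆ M') (hw : Win m M) : Win m M' := by
  obtain ⟨Q, hQ, S, hS, hc⟩ := hw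
  exact ⟨Q, hQ, S, hS.trans h, hc⟩

lemma win_S {m : ℕ} {M : Set Cell} {o d e : Cell} (h : Frame d e)
    (hrow : ∀ i : ℤ, 0 ≤ i → i < (m:ℤ) → pt o d e i 0 ∈ M) : Win m M := by
  refine ⟨Srow m, Or.inl (Or.inl (Or.inl rfl)), ancestor_of_image (isSym_pt h o) ?_⟩
  rintro c ⟨p, hp, rfl⟩
  obtain ⟨h0, h1, h2⟩ := hp
  have : p = (p.1, (0:ℤ)) := by rw [← h2]
  rw [show ((fun q : Cell => pt o d e q.1 q.2) p) = pt o d e p.1 p.2 from rfl, h2]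
  exact hrow p.1 h0 h1

lemma win_T2 {m : ℕ} {M : Set Cell} {o d e : Cell} (h : Frame d e)
    (h1 : pt o d e 0 0 ∈ M) (h2 : pt o d e 1 0 ∈ M) (h3 : pt o d e 2 0 ∈ M)
    (h4 : pt o d e 1 1 ∈ M) : Win m M := by
  refine ⟨T2, Or.inl (Or.inl (Or.inr rfl)), ancestor_of_image (isSym_pt h o) ?_⟩
  rintro c ⟨p, hp, rfl⟩
  simp only [T2, Set.mem_insert_iff, Set.mem_singleton_iff] at hp
  rcases hp with rfl | rfl | rfl | rfl <;> simpa

lemma win_C {m : ℕ} {M : Set Cell} {o d e : Cell} (h : Frame d e) {n : ℕ} (hn : 2 ≤ n)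
    (hrow : ∀ i : ℤ, 0 ≤ i → i < (n:ℤ) → pt o d e i 0 ∈ M)
    (ha : pt o d e 0 1 ∈ M) (hb : pt o d e ((n:ℤ)-1) 1 ∈ M) : Win m M := by
  refine ⟨Cpoly n, Or.inl (Or.inr ⟨n, hn, rfl⟩), ancestor_of_image (isSym_pt h o) ?_⟩
  rintro c ⟨p, hp, rfl⟩
  simp only [Cpoly, Set.mem_union, Set.mem_setOf_eq, Set.mem_insert_iff,
    Set.mem_singleton_iff] at hp
  rcases hp with ⟨h0, h1, h2⟩ | rfl | rfl
  · rw [show ((fun q : Cell => pt o d e q.1 q.2) p) = pt o d e p.1 p.2 from rfl, h2]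
    exact hrow p.1 h0 h1
  · simpa
  · simpa

lemma win_Z {m : ℕ} {M : Set Cell} {o d e : Cell} (h : Frame d e) {n : ℕ} (hn : 2 ≤ n)
    (hrow : ∀ i : ℤ, 0 ≤ i → i < (n:ℤ) → pt o d e i 0 ∈ M)
    (ha : pt o d e 0 1 ∈ M) (hb : pt o d e ((n:ℤ)-1) (-1) ∈ M) : Win m M := by
  refine ⟨Zpoly n, Or.inr ⟨n, hn, rfl⟩, ancestor_of_image (isSym_pt h o) ?_⟩
  rintro c ⟨p, hp, rfl⟩
  simp only [Zpoly, Set.mem_union, Set.mem_setOf_eq, Set.mem_insert_iff,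
    Set.mem_singleton_iff] at hp
  rcases hp with ⟨h0, h1, h2⟩ | rfl | rfl
  · rw [show ((fun q : Cell => pt o d e q.1 q.2) p) = pt o d e p.1 p.2 from rfl, h2]
    exact hrow p.1 h0 h1
  · simpa
  · simpa

lemma win_S_sub {m : ℕ} {M : Set Cell} {o d : Cell} (hd : IsDir d) {n : ℕ} (hmn : m ≤ n)
    (hrow : segP o d n ⊆ M) : Win m M := by
  refine win_S (o := o) (frame_rot hd) (fun i h0 h1 => ?_)
  rw [← cellAt_eq_pt]
  exact hrow (mem_segP_of h0 (by exact_mod_cast lt_of_lt_of_le h1 (by exact_mod_cast hmn)))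

end Stmt4
namespace Stmt4

open Classical in
/-- fallback: some unmarked cell. -/
noncomputable def fb (X : Set Cell) : Cell := if h : ∃ c, c ∉ X then h.choose else (0,0)

lemma fb_spec {X : Set Cell} (h : ∃ c, c ∉ X) : fb X ∉ X := by
  rw [fb, dif_pos h]; exact h.choose_spec

/-- the states of the maker's strategy machine -/
inductive GSt where
  | I : GSt
  | A (o d : Cell) (k : ℕ) : GSt
  | B (o d e : Cell) (n : ℕ) : GSt
  | C (o d e : Cell) (a b : ℕ) : GSt
  | F : GSt

def shape : GSt → Set Cell
  | .I => ∅
  | .F => ∅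
  | .A o d k => segP o d k
  | .B o d e n => segP o d n ∪ {pt o d e ((n:ℤ)-1) 1}
  | .C o d e a b => segP o d a ∪ segP (cellAt o d ((a:ℤ)-1)) e b

open Classical in
noncomputable def step (m : ℕ) (s : GSt) (X : Set Cell) : Cell × GSt :=
  if h : ∃ c, c ∉ X ∧ Win m (shape s ∪ {c}) then (h.choose, .F) else
  match s with
  | .I => if (0,0) ∉ X then ((0,0), .A (0,0) (1,0) 1) else (fb X, .F)
  | .A o d k =>
    if k = 1 then
      if cellAt o d 1 ∉ X then (cellAt o d 1, .A o d 2)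
      else if cellAt o d (-1) ∉ X then (cellAt o d (-1), .A (cellAt o d (-1)) d 2)
      else if cellAt o (rot d) 1 ∉ X then (cellAt o (rot d) 1, .A o (rot d) 2)
      else if cellAt o (rot d) (-1) ∉ X then
        (cellAt o (rot d) (-1), .A (cellAt o (rot d) (-1)) (rot d) 2)
      else (fb X, .F)
    else
      if cellAt o d k ∉ X then (cellAt o d k, .A o d (k+1))
      else if cellAt o d (-1) ∉ X then (cellAt o d (-1), .A (cellAt o d (-1)) d (k+1))
      else if pt o d (rot d) ((k:ℤ)-1) 1 ∉ X then
        (pt o d (rot d) ((k:ℤ)-1) 1, .B o d (rot d) k)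
      else if pt o d (-(rot d)) ((k:ℤ)-1) 1 ∉ X then
        (pt o d (-(rot d)) ((k:ℤ)-1) 1, .B o d (-(rot d)) k)
      else if pt o d (rot d) 0 1 ∉ X then
        (pt o d (rot d) 0 1, .B (cellAt o d ((k:ℤ)-1)) (-d) (rot d) k)
      else if pt o d (-(rot d)) 0 1 ∉ X then
        (pt o d (-(rot d)) 0 1, .B (cellAt o d ((k:ℤ)-1)) (-d) (-(rot d)) k)
      else (fb X, .F)
  | .B o d e n =>
      if pt o d e ((n:ℤ)-1) 2 ∉ X then (pt o d e ((n:ℤ)-1) 2, .C o d e n 3) else (fb X, .F)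
  | .C o d e a b =>
      if pt o d e ((a:ℤ)-1) (b:ℤ) ∉ X then (pt o d e ((a:ℤ)-1) (b:ℤ), .C o d e a (b+1))
      else (fb X, .F)
  | .F => (fb X, .F)

lemma step_fst_notMem {m : ℕ} {s : GSt} {X : Set Cell} (hX : ∃ c, c ∉ X) :
    (step m s X).1 ∉ X := by
  rw [step]
  split
  · next h => exact h.choose_spec.1
  · rcases s with _ | ⟨o, d, k⟩ | ⟨o, d, e, n⟩ | ⟨o, d, e, a, b⟩ | _ <;>
      simp only <;>
      first
        | exact fb_spec hX
        | (split_ifs <;> first | assumption | exact fb_spec hX)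

/-- state recomputation from history -/
noncomputable def stIter (m : ℕ) (ms : List Cell) (bs : List (Cell × Cell)) : ℕ → GSt
  | 0 => .I
  | t+1 => (step m (stIter m ms bs t) (markedCells (ms.take t) (bs.take t))).2

/-- the maker's strategy -/
noncomputable def strat (m : ℕ) : MStrategy :=
  fun ms bs => (step m (stIter m ms bs ms.length) (markedCells ms bs)).1

lemma marked_finite (ms : List Cell) (bs : List (Cell × Cell)) :
    (markedCells ms bs).Finite := by
  have : markedCells ms bs ⊆
      {c | c ∈ ms} ∪ ({c | ∃ p ∈ bs, c = p.1} ∪ {c | ∃ p ∈ bs, c = p.2}) := by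
    rintro c (h | ⟨p, hp, h | h⟩)
    · exact Or.inl h
    · exact Or.inr (Or.inl ⟨p, hp, h⟩)
    · exact Or.inr (Or.inr ⟨p, hp, h⟩)
  refine Set.Finite.subset ?_ this
  refine (List.finite_toSet ms).union (Set.Finite.union ?_ ?_)
  · refine Set.Finite.subset ((bs.finite_toSet).image Prod.fst) ?_
    rintro c ⟨p, hp, rfl⟩; exact ⟨p, hp, rfl⟩
  · refine Set.Finite.subset ((bs.finite_toSet).image Prod.snd) ?_
    rintro c ⟨p, hp, rfl⟩; exact ⟨p, hp, rfl⟩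

lemma exists_unmarked (ms : List Cell) (bs : List (Cell × Cell)) :
    ∃ c, c ∉ markedCells ms bs :=
  ((marked_finite ms bs).infinite_compl).nonempty

lemma strat_legal (m : ℕ) : MLegal (strat m) := fun ms bs =>
  step_fst_notMem (exists_unmarked ms bs)

end Stmt4
namespace Stmt4

section Game

variable (m : ℕ) (τ : BStrategy)

/-- maker's move in round n+1 -/
noncomputable def mvM (n : ℕ) : Cell :=
  strat m (play (strat m) τ n).1 (play (strat m) τ n).2

/-- breaker's pair in round n+1 -/
noncomputable def mvB (n : ℕ) : Cell × Cell :=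
  τ ((play (strat m) τ n).1 ++ [mvM m τ n]) (play (strat m) τ n).2

noncomputable def mk (n : ℕ) : Set Cell := makerSet (strat m) τ n

noncomputable def bf (n : ℕ) : Finset Cell :=
  ((play (strat m) τ n).2.flatMap fun p => [p.1, p.2]).toFinset

noncomputable def mkd (n : ℕ) : Set Cell :=
  markedCells (play (strat m) τ n).1 (play (strat m) τ n).2

lemma play_succ (n : ℕ) :
    play (strat m) τ (n+1) =
      ((play (strat m) τ n).1 ++ [mvM m τ n], (play (strat m) τ n).2 ++ [mvB m τ n]) := rfl

lemma play_fst_length (n : ℕ) : (play (strat m) τ n).1.length = n := by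
  induction n with
  | zero => rfl
  | succ n ih => rw [play_succ]; simp [ih]

lemma mk_succ (n : ℕ) : mk m τ (n+1) = mk m τ n ∪ {mvM m τ n} := by
  ext c; simp [mk, makerSet, play_succ, or_comm]

lemma bf_succ_fin (n : ℕ) :
    bf m τ (n+1) = insert (mvB m τ n).1 (insert (mvB m τ n).2 (bf m τ n)) := by
  ext c
  rw [bf, play_succ]
  simp only [List.flatMap_append, List.toFinset_append, Finset.mem_union,
    List.mem_toFinset, List.flatMap_cons, List.flatMap_nil, List.mem_append,
    List.mem_cons, List.not_mem_nil, or_false, Finset.mem_insert, bf]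
  tauto

lemma mkd_eq (n : ℕ) : mkd m τ n = mk m τ n ∪ ↑(bf m τ n) := by
  ext c
  simp only [mkd, markedCells, mk, makerSet, bf, Set.mem_union, Set.mem_setOf_eq,
    Finset.coe_sort_coe, Finset.mem_coe, List.mem_toFinset, List.mem_flatMap]
  constructor
  · rintro (h | ⟨p, hp, h | h⟩)
    · exact Or.inl h
    · exact Or.inr ⟨p, hp, by simp [h]⟩
    · exact Or.inr ⟨p, hp, by simp [h]⟩
  · rintro (h | ⟨p, hp, h⟩)
    · exact Or.inl h
    · simp at h
      rcases h with h | h <;> exact Or.inr ⟨p, hp, by tauto⟩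

lemma mk_subset_mkd (n : ℕ) : mk m τ n ⊆ mkd m τ n := by
  rw [mkd_eq]; exact Set.subset_union_left

lemma bf_subset_mkd (n : ℕ) (c : Cell) (h : c ∈ bf m τ n) : c ∈ mkd m τ n := by
  rw [mkd_eq]; exact Set.mem_union_right _ h

lemma mk_zero : mk m τ 0 = ∅ := by ext c; simp [mk, makerSet, play]

lemma bf_zero : bf m τ 0 = ∅ := by simp [bf, play]

lemma mvB_legal (hτ : BLegal τ) (n : ℕ) :
    (mvB m τ n).1 ≠ (mvB m τ n).2 ∧
    (mvB m τ n).1 ∉ mkd m τ n ∧ (mvB m τ n).2 ∉ mkd m τ n ∧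
    (mvB m τ n).1 ≠ mvM m τ n ∧ (mvB m τ n).2 ≠ mvM m τ n := by
  obtain ⟨h1, h2, h3⟩ := hτ ((play (strat m) τ n).1 ++ [mvM m τ n]) (play (strat m) τ n).2
  have hsub : mkd m τ n ⊆ markedCells ((play (strat m) τ n).1 ++ [mvM m τ n])
      (play (strat m) τ n).2 := by
    rintro c (h | h)
    · exact Or.inl (by simp [List.mem_append]; tauto)
    · exact Or.inr h
  have hm1 : mvM m τ n ∈ markedCells ((play (strat m) τ n).1 ++ [mvM m τ n])
      (play (strat m) τ n).2 := Or.inl (by simp)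
  refine ⟨h1, fun h => h2 (hsub h), fun h => h3 (hsub h), fun h => ?_, fun h => ?_⟩
  · refine h2 ?_
    have : (mvB m τ n).1 ∈ markedCells ((play (strat m) τ n).1 ++ [mvM m τ n])
        (play (strat m) τ n).2 := by rw [h]; exact hm1
    exact this
  · refine h3 ?_
    have : (mvB m τ n).2 ∈ markedCells ((play (strat m) τ n).1 ++ [mvM m τ n])
        (play (strat m) τ n).2 := by rw [h]; exact hm1
    exact this

lemma bf_card (hτ : BLegal τ) (n : ℕ) : (bf m τ n).card = 2 * n := by
  induction n with
  | zero => simp [bf_zero]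
  | succ n ih =>
    obtain ⟨h1, h2, h3, _, _⟩ := mvB_legal m τ hτ n
    have hy1 : (mvB m τ n).1 ∉ bf m τ n := fun h => h2 (bf_subset_mkd m τ n _ h)
    have hy2 : (mvB m τ n).2 ∉ bf m τ n := fun h => h3 (bf_subset_mkd m τ n _ h)
    rw [bf_succ_fin, Finset.card_insert_of_notMem (by simp [hy1, h1]),
      Finset.card_insert_of_notMem hy2, ih]
    ring

/-- the machine state before round n+1 -/
noncomputable def stN (n : ℕ) : GSt :=
  stIter m (play (strat m) τ n).1 (play (strat m) τ n).2 n

lemma stIter_eq_of_take {ms ms' : List Cell} {bs bs' : List (Cell × Cell)} (t : ℕ)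
    (h : ∀ j, j < t → ms.take j = ms'.take j ∧ bs.take j = bs'.take j) :
    stIter m ms bs t = stIter m ms' bs' t := by
  induction t with
  | zero => rfl
  | succ t ih =>
    rw [stIter, stIter, ih (fun j hj => h j (by omega)), (h t (by omega)).1,
      (h t (by omega)).2]

lemma play_snd_length (n : ℕ) : (play (strat m) τ n).2.length = n := by
  induction n with
  | zero => rfl
  | succ n ih => rw [play_succ]; simp [ih]

lemma take_play (n t : ℕ) (ht : t ≤ n) :
    (play (strat m) τ n).1.take t = (play (strat m) τ t).1.take t ∧
    (play (strat m) τ n).2.take t = (play (strat m) τ t).2.take t := by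
  induction n with
  | zero => have : t = 0 := by omega
            subst this; exact ⟨rfl, rfl⟩
  | succ n ih =>
    by_cases h : t ≤ n
    · obtain ⟨ih1, ih2⟩ := ih h
      rw [play_succ]
      constructor
      · rw [← ih1]
        exact List.take_append_of_le_length (by rw [play_fst_length]; omega)
      · rw [← ih2]
        exact List.take_append_of_le_length (by rw [play_snd_length]; omega)
    · have : t = n + 1 := by omega
      subst this; exact ⟨rfl, rfl⟩

lemma stN_eq (n t : ℕ) (ht : t ≤ n) :
    stIter m (play (strat m) τ n).1 (play (strat m) τ n).2 t = stN m τ t := by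
  rw [stN]
  refine stIter_eq_of_take m t (fun j hj => ?_)
  obtain ⟨a1, a2⟩ := take_play m τ n j (by omega)
  obtain ⟨b1, b2⟩ := take_play m τ t j (by omega)
  exact ⟨a1.trans b1.symm, a2.trans b2.symm⟩

lemma stN_succ (n : ℕ) : stN m τ (n+1) = (step m (stN m τ n) (mkd m τ n)).2 := by
  rw [stN, stIter]
  have t1 : (play (strat m) τ (n+1)).1.take n = (play (strat m) τ n).1 := by
    rw [(take_play m τ (n+1) n (Nat.le_succ n)).1]
    exact List.take_of_length_le (le_of_eq (play_fst_length m τ n))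
  have t2 : (play (strat m) τ (n+1)).2.take n = (play (strat m) τ n).2 := by
    rw [(take_play m τ (n+1) n (Nat.le_succ n)).2]
    exact List.take_of_length_le (le_of_eq (play_snd_length m τ n))
  rw [stN_eq m τ (n+1) n (Nat.le_succ n), t1, t2, mkd]

lemma mvM_eq (n : ℕ) : mvM m τ n = (step m (stN m τ n) (mkd m τ n)).1 := by
  rw [mvM, strat, mkd]
  congr 1
  rw [play_fst_length]
  rfl

end Game

end Stmt4
namespace Stmt4

section Game
variable (m : ℕ) (τ : BStrategy)

/-- the invariant, case A: the maker's cells form a segment of length n. -/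
def InvA (n : ℕ) : Prop :=
  ∃ o d, IsDir d ∧ stN m τ n = .A o d n ∧ 1 ≤ n ∧ mk m τ n = segP o d n

/-- case B : segment of length k, both extensions blocked, plus a corner cell. -/
def InvB (n : ℕ) : Prop :=
  ∃ o d e k, Frame d e ∧ stN m τ n = .B o d e k ∧ 2 ≤ k ∧ n = k + 1 ∧
    mk m τ n = segP o d k ∪ {pt o d e ((k:ℤ)-1) 1} ∧
    cellAt o d (-1) ∈ bf m τ n ∧ cellAt o d (k:ℤ) ∈ bf m τ n

/-- case C : L-shape, arm along `e` growing, forward strip clean (or a win available). -/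
def InvC (n : ℕ) : Prop :=
  ∃ o d e a b, Frame d e ∧ stN m τ n = .C o d e a b ∧ 2 ≤ a ∧ 3 ≤ b ∧ n + 1 = a + b ∧
    mk m τ n = segP o d a ∪ segP (cellAt o d ((a:ℤ)-1)) e b ∧
    ((∀ i j : ℤ, (a:ℤ) - 2 ≤ i → i ≤ (a:ℤ) → (b:ℤ) ≤ j → pt o d e i j ∉ bf m τ n)
      ∨ (∃ c, c ∉ mkd m τ n ∧ Win m (mk m τ n ∪ {c})))

def Inv (n : ℕ) : Prop :=
  Win m (mk m τ n) ∨ (n = 0 ∧ stN m τ n = .I) ∨ InvA m τ n ∨ InvB m τ n ∨ InvC m τ n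

lemma mkd_zero : mkd m τ 0 = ∅ := by
  rw [mkd_eq, mk_zero, bf_zero]; simp

lemma inv_zero : Inv m τ 0 := Or.inr (Or.inl ⟨rfl, rfl⟩)

/-- if a winning move is available and the state's shape matches, the maker wins now. -/
lemma fire_case {n : ℕ} (hshape : shape (stN m τ n) = mk m τ n)
    (hfire : ∃ c, c ∉ mkd m τ n ∧ Win m (mk m τ n ∪ {c})) : Win m (mk m τ (n+1)) := by
  have hfire' : ∃ c, c ∉ mkd m τ n ∧ Win m (shape (stN m τ n) ∪ {c}) := by
    rw [hshape]; exact hfire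
  have hmv : mvM m τ n = hfire'.choose := by
    rw [mvM_eq, step, dif_pos hfire']
  rw [mk_succ, hmv, ← hshape]
  exact hfire'.choose_spec.2

/-- if no winning move is available then every winning cell outside the maker's cells
is a breaker cell. -/
lemma forced {n : ℕ} (hsil : ¬ ∃ c, c ∉ mkd m τ n ∧ Win m (mk m τ n ∪ {c}))
    {c : Cell} (hw : Win m (mk m τ n ∪ {c})) (hc : c ∉ mk m τ n) : c ∈ bf m τ n := by
  by_cases h : c ∈ mkd m τ n
  · rw [mkd_eq] at h
    rcases h with h | h
    · exact absurd h hc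
    · exact h
  · exact absurd ⟨c, h, hw⟩ hsil

lemma win_mono_mk {n : ℕ} (h : Win m (mk m τ n)) : Win m (mk m τ (n+1)) :=
  win_mono (by rw [mk_succ]; exact Set.subset_union_left) h

end Game

/-- distinct cells in a finset: four cells give cardinality at least 4 -/
lemma four_le_card {s : Finset Cell} {c1 c2 c3 c4 : Cell}
    (h1 : c1 ∈ s) (h2 : c2 ∈ s) (h3 : c3 ∈ s) (h4 : c4 ∈ s)
    (d12 : c1 ≠ c2) (d13 : c1 ≠ c3) (d14 : c1 ≠ c4)
    (d23 : c2 ≠ c3) (d24 : c2 ≠ c4) (d34 : c3 ≠ c4) : 4 ≤ s.card := by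
  have : ({c1, c2, c3, c4} : Finset Cell) ⊆ s := by
    intro x hx; simp at hx; rcases hx with rfl|rfl|rfl|rfl <;> assumption
  calc 4 = ({c1, c2, c3, c4} : Finset Cell).card := by
            rw [Finset.card_insert_of_notMem (by simp [d12, d13, d14]),
              Finset.card_insert_of_notMem (by simp [d23, d24]),
              Finset.card_insert_of_notMem (by simp [d34]), Finset.card_singleton]
       _ ≤ s.card := Finset.card_le_card this

/-- index set for the counting argument at a stuck segment -/
noncomputable def idxA (k : ℕ) : Finset (ℤ×ℤ) :=
  ((Finset.Icc (1:ℤ) ((k:ℤ)-2)) ×ˢ ({-1,1} : Finset ℤ)) ∪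
    {(-1,0),((k:ℤ),0),((k:ℤ)-1,1),((k:ℤ)-1,-1),(0,1),(0,-1)}

lemma card_idxA {k : ℕ} (hk : 2 ≤ k) : (idxA k).card = 2*k + 2 := by
  rw [idxA, Finset.card_union_of_disjoint, Finset.card_product]
  · have h1 : (Finset.Icc (1:ℤ) ((k:ℤ)-2)).card = k - 2 := by
      rw [Int.card_Icc]
      omega
    have h2 : ({-1,1} : Finset ℤ).card = 2 := by decide
    have h6 : ({(-1,0),((k:ℤ),0),((k:ℤ)-1,1),((k:ℤ)-1,-1),(0,1),(0,-1)} :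
        Finset (ℤ×ℤ)).card = 6 := by
      rw [Finset.card_insert_of_notMem (by simp [Prod.ext_iff] <;> omega),
        Finset.card_insert_of_notMem (by simp [Prod.ext_iff] <;> omega),
        Finset.card_insert_of_notMem (by simp [Prod.ext_iff] <;> omega),
        Finset.card_insert_of_notMem (by simp [Prod.ext_iff] <;> omega),
        Finset.card_insert_of_notMem (by simp [Prod.ext_iff] <;> omega),
        Finset.card_singleton]
    rw [h1, h2, h6]
    omega
  · rw [Finset.disjoint_left]
    intro q hq hq'
    obtain ⟨hq1, hq2⟩ := Finset.mem_product.mp hq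
    rw [Finset.mem_Icc] at hq1
    simp only [Finset.mem_insert, Finset.mem_singleton] at hq2
    simp only [Finset.mem_insert, Finset.mem_singleton, Prod.ext_iff] at hq'
    rcases hq' with h|h|h|h|h|h <;> obtain ⟨ha, hb⟩ := h <;> rcases hq2 with h'|h' <;> omega

/-- index set for the counting argument at state B -/
noncomputable def idxB (k : ℕ) : Finset (ℤ×ℤ) :=
  ((Finset.Icc (1:ℤ) ((k:ℤ)-2)) ×ˢ ({-1,1} : Finset ℤ)) ∪
    {(-1,0),((k:ℤ),0),(0,1),(0,-1),((k:ℤ)-1,-1),((k:ℤ),1)}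

lemma card_idxB {k : ℕ} (hk : 2 ≤ k) : (idxB k).card = 2*k + 2 := by
  rw [idxB, Finset.card_union_of_disjoint, Finset.card_product]
  · have h1 : (Finset.Icc (1:ℤ) ((k:ℤ)-2)).card = k - 2 := by
      rw [Int.card_Icc]
      omega
    have h2 : ({-1,1} : Finset ℤ).card = 2 := by decide
    have h6 : ({(-1,0),((k:ℤ),0),(0,1),(0,-1),((k:ℤ)-1,-1),((k:ℤ),1)} :
        Finset (ℤ×ℤ)).card = 6 := by
      rw [Finset.card_insert_of_notMem (by simp [Prod.ext_iff] <;> omega),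
        Finset.card_insert_of_notMem (by simp [Prod.ext_iff] <;> omega),
        Finset.card_insert_of_notMem (by simp [Prod.ext_iff] <;> omega),
        Finset.card_insert_of_notMem (by simp [Prod.ext_iff] <;> omega),
        Finset.card_insert_of_notMem (by simp [Prod.ext_iff] <;> omega),
        Finset.card_singleton]
    rw [h1, h2, h6]
    omega
  · rw [Finset.disjoint_left]
    intro q hq hq'
    obtain ⟨hq1, hq2⟩ := Finset.mem_product.mp hq
    rw [Finset.mem_Icc] at hq1
    simp only [Finset.mem_insert, Finset.mem_singleton] at hq2
    simp only [Finset.mem_insert, Finset.mem_singleton, Prod.ext_iff] at hq'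
    rcases hq' with h|h|h|h|h|h <;> obtain ⟨ha, hb⟩ := h <;> rcases hq2 with h'|h' <;> omega

lemma image_card_le {o d e : Cell} (h : Frame d e) (s : Finset (ℤ×ℤ)) {t : Finset Cell}
    (hsub : ∀ q ∈ s, pt o d e q.1 q.2 ∈ t) : s.card ≤ t.card := by
  have : s.card = (s.image (fun q : ℤ×ℤ => pt o d e q.1 q.2)).card := by
    rw [Finset.card_image_of_injOn]
    intro q1 _ q2 _ heq
    obtain ⟨a, b⟩ := pt_inj h heq
    exact Prod.ext a b
  rw [this]
  refine Finset.card_le_card ?_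
  intro x hx
  rw [Finset.mem_image] at hx
  obtain ⟨q, hq, rfl⟩ := hx
  exact hsub q hq

end Stmt4
namespace Stmt4

lemma pt_e (o d e : Cell) (j : ℤ) : pt o d e 0 j = cellAt o e j := by
  refine Prod.ext ?_ ?_ <;> simp only [pt, cellAt] <;> ring

section Game
variable (m : ℕ) (τ : BStrategy)

lemma bf_mono (n : ℕ) : bf m τ n ⊆ bf m τ (n+1) := by
  rw [bf_succ_fin]
  exact (Finset.subset_insert _ _).trans (Finset.subset_insert _ _)

lemma mem_bf_of_mkd {n : ℕ} {c : Cell} (h : c ∈ mkd m τ n) (h2 : c ∉ mk m τ n) :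
    c ∈ bf m τ n := by
  rw [mkd_eq] at h
  rcases h with h | h
  · exact absurd h h2
  · exact h

lemma stepI {n : ℕ} (h0 : n = 0) (hst : stN m τ n = .I) : Inv m τ (n+1) := by
  subst h0
  have hsh : shape (stN m τ 0) = mk m τ 0 := by rw [hst, mk_zero]; rfl
  by_cases hfire : ∃ c, c ∉ mkd m τ 0 ∧ Win m (mk m τ 0 ∪ {c})
  · exact Or.inl (fire_case m τ hsh hfire)
  · have hcond : ¬ ∃ c, c ∉ mkd m τ 0 ∧ Win m (shape GSt.I ∪ {c}) := by
      rintro ⟨c, h1, h2⟩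
      refine hfire ⟨c, h1, ?_⟩
      rw [mk_zero]; exact h2
    have hm : ((0,0) : Cell) ∉ mkd m τ 0 := by rw [mkd_zero]; simp
    have heval : step m (stN m τ 0) (mkd m τ 0) = (((0:ℤ),(0:ℤ)), .A (0,0) (1,0) 1) := by
      rw [hst, step, dif_neg hcond]
      simp only [if_pos hm]
    refine Or.inr (Or.inr (Or.inl ⟨(0,0), (1,0), Or.inl rfl, ?_, le_refl 1, ?_⟩))
    · rw [stN_succ, heval]
    · rw [mk_succ, mk_zero, mvM_eq, heval, segP_one]
      simp

lemma stepA (hτ : BLegal τ) {n : ℕ} (hA : InvA m τ n) : Inv m τ (n+1) := by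
  obtain ⟨o, d, hd, hst, hk1, hmk⟩ := hA
  have hsh : shape (stN m τ n) = mk m τ n := by rw [hst]; exact hmk.symm
  by_cases hfire : ∃ c, c ∉ mkd m τ n ∧ Win m (mk m τ n ∪ {c})
  · exact Or.inl (fire_case m τ hsh hfire)
  have hcond : ¬ ∃ c, c ∉ mkd m τ n ∧ Win m (shape (GSt.A o d n) ∪ {c}) := by
    rintro ⟨c, h1, h2⟩
    refine hfire ⟨c, h1, ?_⟩
    rw [hmk]; exact h2
  set e := rot d with he
  have hfr : Frame d e := frame_rot hd
  have notmk : ∀ i j : ℤ, (j ≠ 0 ∨ i < 0 ∨ (n:ℤ) ≤ i) → pt o d e i j ∉ mk m τ n := by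
    intro i j hij hmem
    rw [hmk, mem_segP_pt hfr] at hmem
    omega
  by_cases hn1 : n = 1
  · -- length-one segment : extend somewhere (four candidate cells, at most two blocked)
    subst hn1
    by_cases h1 : cellAt o d 1 ∉ mkd m τ 1
    · have heval : step m (stN m τ 1) (mkd m τ 1) = (cellAt o d 1, .A o d 2) := by
        rw [hst, step, dif_neg hcond]
        simp only [if_pos rfl, if_true, if_pos h1]
      refine Or.inr (Or.inr (Or.inl ⟨o, d, hd, ?_, by omega, ?_⟩))
      · rw [stN_succ, heval]
      · have hmv : mvM m τ 1 = cellAt o d 1 := by rw [mvM_eq, heval]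
        rw [mk_succ, hmv, hmk, segP_two]
    · by_cases h2 : cellAt o d (-1) ∉ mkd m τ 1
      · have heval : step m (stN m τ 1) (mkd m τ 1) =
            (cellAt o d (-1), .A (cellAt o d (-1)) d 2) := by
          rw [hst, step, dif_neg hcond]
          simp only [if_pos rfl, if_true, if_neg h1, if_pos h2]
        refine Or.inr (Or.inr (Or.inl ⟨cellAt o d (-1), d, hd, ?_, by omega, ?_⟩))
        · rw [stN_succ, heval]
        · have hmv : mvM m τ 1 = cellAt o d (-1) := by rw [mvM_eq, heval]
          rw [mk_succ, hmv, hmk, segP_two_back]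
      · by_cases h3 : cellAt o e 1 ∉ mkd m τ 1
        · have heval : step m (stN m τ 1) (mkd m τ 1) = (cellAt o e 1, .A o e 2) := by
            rw [hst, step, dif_neg hcond]
            simp only [← he, if_pos rfl, if_true, if_neg h1, if_neg h2, if_pos h3]
          refine Or.inr (Or.inr (Or.inl ⟨o, e, rot_dir hd, ?_, by omega, ?_⟩))
          · rw [stN_succ, heval]
          · have hmv : mvM m τ 1 = cellAt o e 1 := by rw [mvM_eq, heval]
            rw [mk_succ, hmv, hmk, segP_one, ← segP_one o e, segP_two]
        · by_cases h4 : cellAt o e (-1) ∉ mkd m τ 1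
          · have heval : step m (stN m τ 1) (mkd m τ 1) =
                (cellAt o e (-1), .A (cellAt o e (-1)) e 2) := by
              rw [hst, step, dif_neg hcond]
              simp only [← he, if_pos rfl, if_true, if_neg h1, if_neg h2, if_neg h3, if_pos h4]
            refine Or.inr (Or.inr (Or.inl ⟨cellAt o e (-1), e, rot_dir hd, ?_, by omega, ?_⟩))
            · rw [stN_succ, heval]
            · have hmv : mvM m τ 1 = cellAt o e (-1) := by rw [mvM_eq, heval]
              rw [mk_succ, hmv, hmk, segP_one, ← segP_one o e, segP_two_back]
          · exfalso
            push_neg at h1 h2 h3 h4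
            have hb1 : cellAt o d 1 ∈ bf m τ 1 := by
              refine mem_bf_of_mkd m τ h1 ?_
              rw [cellAt_eq_pt o d e]
              exact notmk 1 0 (by omega)
            have hb2 : cellAt o d (-1) ∈ bf m τ 1 := by
              refine mem_bf_of_mkd m τ h2 ?_
              rw [cellAt_eq_pt o d e]
              exact notmk (-1) 0 (by omega)
            have hb3 : cellAt o e 1 ∈ bf m τ 1 := by
              refine mem_bf_of_mkd m τ h3 ?_
              rw [← pt_e o d e]
              exact notmk 0 1 (by omega)
            have hb4 : cellAt o e (-1) ∈ bf m τ 1 := by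
              refine mem_bf_of_mkd m τ h4 ?_
              rw [← pt_e o d e]
              exact notmk 0 (-1) (by omega)
            have hcard := bf_card m τ hτ 1
            have hd4 : (4:ℕ) ≤ (bf m τ 1).card := by
              rw [cellAt_eq_pt o d e] at hb1
              rw [cellAt_eq_pt o d e] at hb2
              rw [← pt_e o d e] at hb3
              rw [← pt_e o d e] at hb4
              refine four_le_card hb1 hb2 hb3 hb4 ?_ ?_ ?_ ?_ ?_ ?_ <;>
                (intro hx; obtain ⟨hxa, hxb⟩ := pt_inj hfr hx; omega)
            omega
  · -- length ≥ 2
    have hn2 : 2 ≤ n := by omega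
    by_cases h1 : cellAt o d (n:ℤ) ∉ mkd m τ n
    · have heval : step m (stN m τ n) (mkd m τ n) = (cellAt o d (n:ℤ), .A o d (n+1)) := by
        rw [hst, step, dif_neg hcond]
        simp only [if_neg hn1, if_pos h1]
      refine Or.inr (Or.inr (Or.inl ⟨o, d, hd, ?_, by omega, ?_⟩))
      · rw [stN_succ, heval]
      · have hmv : mvM m τ n = cellAt o d (n:ℤ) := by rw [mvM_eq, heval]
        rw [mk_succ, hmv, hmk, ← segP_succ]
    · by_cases h2 : cellAt o d (-1) ∉ mkd m τ n
      · have heval : step m (stN m τ n) (mkd m τ n) =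
            (cellAt o d (-1), .A (cellAt o d (-1)) d (n+1)) := by
          rw [hst, step, dif_neg hcond]
          simp only [if_neg hn1, if_neg h1, if_pos h2]
        refine Or.inr (Or.inr (Or.inl ⟨cellAt o d (-1), d, hd, ?_, by omega, ?_⟩))
        · rw [stN_succ, heval]
        · have hmv : mvM m τ n = cellAt o d (-1) := by rw [mvM_eq, heval]
          rw [mk_succ, hmv, hmk, segP_back]
      · -- segment blocked at both ends
        push_neg at h1 h2
        have hb1 : cellAt o d (n:ℤ) ∈ bf m τ n := by
          refine mem_bf_of_mkd m τ h1 ?_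
          rw [cellAt_eq_pt o d e]
          exact notmk (n:ℤ) 0 (by omega)
        have hb2 : cellAt o d (-1) ∈ bf m τ n := by
          refine mem_bf_of_mkd m τ h2 ?_
          rw [cellAt_eq_pt o d e]
          exact notmk (-1) 0 (by omega)
        -- interior laterals are forced (instant T2 wins)
        have hint : ∀ i j : ℤ, 1 ≤ i → i ≤ (n:ℤ)-2 → (j = 1 ∨ j = -1) →
            pt o d e i j ∈ bf m τ n := by
          intro i j hi1 hi2 hj
          have hrowmem : ∀ t : ℤ, 0 ≤ t → t < (n:ℤ) →
              cellAt o d t ∈ mk m τ n ∪ {pt o d e i j} := by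
            intro t ht1 ht2
            exact Or.inl (by rw [hmk]; exact mem_segP_of ht1 ht2)
          have hwin : Win m (mk m τ n ∪ {pt o d e i j}) := by
            rcases hj with rfl | rfl
            · refine win_T2 (o := cellAt o d (i-1)) hfr ?_ ?_ ?_ ?_
              · rw [← cellAt_eq_pt, cellAt_rebase]
                exact hrowmem (i-1+0) (by omega) (by omega)
              · rw [← cellAt_eq_pt, cellAt_rebase]
                exact hrowmem (i-1+1) (by omega) (by omega)
              · rw [← cellAt_eq_pt, cellAt_rebase]
                exact hrowmem (i-1+2) (by omega) (by omega)
              · rw [pt_rebase]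
                exact Or.inr (by norm_num)
            · refine win_T2 (o := cellAt o d (i-1)) (frame_neg_right hfr) ?_ ?_ ?_ ?_
              · rw [← cellAt_eq_pt, cellAt_rebase]
                exact hrowmem (i-1+0) (by omega) (by omega)
              · rw [← cellAt_eq_pt, cellAt_rebase]
                exact hrowmem (i-1+1) (by omega) (by omega)
              · rw [← cellAt_eq_pt, cellAt_rebase]
                exact hrowmem (i-1+2) (by omega) (by omega)
              · rw [pt_rebase, pt_nege]
                exact Or.inr (by norm_num)
          exact forced m τ hfire hwin (notmk i j (by omega))
        -- at least one of the four corner cells is free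
        have hnotall : ¬ (pt o d e ((n:ℤ)-1) 1 ∈ mkd m τ n ∧
            pt o d e ((n:ℤ)-1) (-1) ∈ mkd m τ n ∧ pt o d e 0 1 ∈ mkd m τ n ∧
            pt o d e 0 (-1) ∈ mkd m τ n) := by
          rintro ⟨a1, a2, a3, a4⟩
          have hball : ∀ q ∈ idxA n, pt o d e q.1 q.2 ∈ bf m τ n := by
            intro q hq
            rw [idxA, Finset.mem_union] at hq
            rcases hq with hq | hq
            · obtain ⟨hq1, hq2⟩ := Finset.mem_product.mp hq
              rw [Finset.mem_Icc] at hq1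
              simp only [Finset.mem_insert, Finset.mem_singleton] at hq2
              exact hint q.1 q.2 hq1.1 hq1.2 (by tauto)
            · simp only [Finset.mem_insert, Finset.mem_singleton] at hq
              rcases hq with rfl|rfl|rfl|rfl|rfl|rfl
              · rw [← cellAt_eq_pt]; exact hb2
              · rw [← cellAt_eq_pt]; exact hb1
              · exact mem_bf_of_mkd m τ a1 (notmk _ _ (by omega))
              · exact mem_bf_of_mkd m τ a2 (notmk _ _ (by omega))
              · exact mem_bf_of_mkd m τ a3 (notmk _ _ (by omega))
              · exact mem_bf_of_mkd m τ a4 (notmk _ _ (by omega))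
          have := image_card_le hfr (idxA n) hball
          rw [card_idxA hn2, bf_card m τ hτ n] at this
          omega
        by_cases h3 : pt o d e ((n:ℤ)-1) 1 ∉ mkd m τ n
        · have heval : step m (stN m τ n) (mkd m τ n) =
              (pt o d e ((n:ℤ)-1) 1, .B o d e n) := by
            rw [hst, step, dif_neg hcond]
            simp only [← he, if_neg hn1, if_neg (not_not_intro h1), if_neg (not_not_intro h2),
              if_pos h3]
          refine Or.inr (Or.inr (Or.inr (Or.inl
            ⟨o, d, e, n, hfr, ?_, hn2, rfl, ?_, ?_, ?_⟩)))
          · rw [stN_succ, heval]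
          · have hmv : mvM m τ n = pt o d e ((n:ℤ)-1) 1 := by rw [mvM_eq, heval]
            rw [mk_succ, hmv, hmk]
          · exact bf_mono m τ n hb2
          · exact bf_mono m τ n hb1
        · push_neg at h3
          by_cases h4 : pt o d (-e) ((n:ℤ)-1) 1 ∉ mkd m τ n
          · have heval : step m (stN m τ n) (mkd m τ n) =
                (pt o d (-e) ((n:ℤ)-1) 1, .B o d (-e) n) := by
              rw [hst, step, dif_neg hcond]
              simp only [← he, if_neg hn1, if_neg (not_not_intro h1), if_neg (not_not_intro h2),
                if_neg (not_not_intro h3), if_pos h4]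
            refine Or.inr (Or.inr (Or.inr (Or.inl
              ⟨o, d, -e, n, frame_neg_right hfr, ?_, hn2, rfl, ?_, ?_, ?_⟩)))
            · rw [stN_succ, heval]
            · have hmv : mvM m τ n = pt o d (-e) ((n:ℤ)-1) 1 := by rw [mvM_eq, heval]
              rw [mk_succ, hmv, hmk]
            · exact bf_mono m τ n hb2
            · exact bf_mono m τ n hb1
          · push_neg at h4
            have h4' : pt o d (-e) ((n:ℤ)-1) 1 ∈ mkd m τ n := h4
            rw [pt_nege] at h4
            by_cases h5 : pt o d e 0 1 ∉ mkd m τ n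
            · have heval : step m (stN m τ n) (mkd m τ n) =
                  (pt o d e 0 1, .B (cellAt o d ((n:ℤ)-1)) (-d) e n) := by
                rw [hst, step, dif_neg hcond]
                simp only [← he, if_neg hn1, if_neg (not_not_intro h1), if_neg (not_not_intro h2),
                  if_neg (not_not_intro h3), if_neg (not_not_intro h4'),
                  if_pos h5]
              refine Or.inr (Or.inr (Or.inr (Or.inl
                ⟨cellAt o d ((n:ℤ)-1), -d, e, n, ⟨(frame_neg_left hfr).1,
                  hfr.2.1, (frame_neg_left hfr).2.2⟩, ?_, hn2, rfl, ?_, ?_, ?_⟩)))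
              · rw [stN_succ, heval]
              · have hmv : mvM m τ n = pt o d e 0 1 := by rw [mvM_eq, heval]
                rw [mk_succ, hmv, hmk, segP_rev o d n (by omega)]
                congr 2
                rw [pt_negd, pt_rebase]
                congr 1
                ring
              · rw [cellAt_negd, cellAt_rebase]
                have : (n:ℤ) - 1 + -(-1) = (n:ℤ) := by ring
                rw [this]
                exact bf_mono m τ n hb1
              · rw [cellAt_negd, cellAt_rebase]
                have : (n:ℤ) - 1 + -(n:ℤ) = -1 := by ring
                rw [this]
                exact bf_mono m τ n hb2
            · push_neg at h5
              have h6 : pt o d e 0 (-1) ∉ mkd m τ n := by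
                intro h6'
                exact hnotall ⟨h3, h4, h5, h6'⟩
              have h6'' : pt o d (-e) 0 1 ∉ mkd m τ n := by
                rw [pt_nege]; exact h6
              have heval : step m (stN m τ n) (mkd m τ n) =
                  (pt o d (-e) 0 1, .B (cellAt o d ((n:ℤ)-1)) (-d) (-e) n) := by
                rw [hst, step, dif_neg hcond]
                simp only [← he, if_neg hn1, if_neg (not_not_intro h1), if_neg (not_not_intro h2),
                  if_neg (not_not_intro h3), if_neg (not_not_intro h4'),
                  if_neg (not_not_intro h5), if_pos h6'']
              refine Or.inr (Or.inr (Or.inr (Or.inl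
                ⟨cellAt o d ((n:ℤ)-1), -d, -e, n, ⟨(frame_neg_left hfr).1,
                  (frame_neg_right hfr).2.1,
                  (frame_neg_left (frame_neg_right hfr)).2.2⟩, ?_, hn2, rfl, ?_, ?_, ?_⟩)))
              · rw [stN_succ, heval]
              · have hmv : mvM m τ n = pt o d (-e) 0 1 := by rw [mvM_eq, heval]
                rw [mk_succ, hmv, hmk, segP_rev o d n (by omega)]
                congr 2
                rw [pt_negd, pt_rebase, pt_nege, pt_nege]
                congr 1
                ring
              · rw [cellAt_negd, cellAt_rebase]
                have : (n:ℤ) - 1 + -(-1) = (n:ℤ) := by ring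
                rw [this]
                exact bf_mono m τ n hb1
              · rw [cellAt_negd, cellAt_rebase]
                have : (n:ℤ) - 1 + -(n:ℤ) = -1 := by ring
                rw [this]
                exact bf_mono m τ n hb2

end Game
end Stmt4
namespace Stmt4

lemma segP_three (o e : Cell) :
    segP o e 3 = {cellAt o e 0, cellAt o e 1, cellAt o e 2} := by
  ext c
  simp only [segP, Set.mem_setOf_eq, Set.mem_insert_iff, Set.mem_singleton_iff]
  constructor
  · rintro ⟨i, h0, h1, rfl⟩
    have : i = 0 ∨ i = 1 ∨ i = 2 := by omega
    rcases this with rfl | rfl | rfl <;> tauto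
  · rintro (rfl | rfl | rfl)
    · exact ⟨0, by omega, by omega, rfl⟩
    · exact ⟨1, by omega, by omega, rfl⟩
    · exact ⟨2, by omega, by omega, rfl⟩

lemma mem_arm_pt {o d e : Cell} (hfr : Frame d e) {α : ℤ} {b : ℕ} {i j : ℤ} :
    pt o d e i j ∈ segP (cellAt o d α) e b ↔ i = α ∧ 0 ≤ j ∧ j < (b:ℤ) := by
  constructor
  · rintro ⟨t, h0, h1, heq⟩
    rw [pt_arm] at heq
    obtain ⟨rfl, rfl⟩ := pt_inj hfr heq.symm
    exact ⟨rfl, h0, h1⟩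
  · rintro ⟨h, h0, h1⟩
    subst h
    exact ⟨j, h0, h1, (pt_arm o d e i j).symm⟩

lemma not_mem_idxB {k : ℕ} {i j : ℤ} (hj : 2 ≤ j) : (i,j) ∉ idxB k := by
  intro h
  rw [idxB, Finset.mem_union] at h
  rcases h with h | h
  · obtain ⟨h1, h2⟩ := Finset.mem_product.mp h
    simp only [Finset.mem_insert, Finset.mem_singleton] at h2
    omega
  · simp only [Finset.mem_insert, Finset.mem_singleton, Prod.ext_iff] at h
    omega

section Game
variable (m : ℕ) (τ : BStrategy)

lemma stepB (hτ : BLegal τ) {n : ℕ} (hB : InvB m τ n) : Inv m τ (n+1) := by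
  obtain ⟨o, d, e, k, hfr, hst, hk2, hnk, hmk, hcapL, hcapR⟩ := hB
  have hsh : shape (stN m τ n) = mk m τ n := by rw [hst]; exact hmk.symm
  by_cases hfire : ∃ c, c ∉ mkd m τ n ∧ Win m (mk m τ n ∪ {c})
  · exact Or.inl (fire_case m τ hsh hfire)
  have hcond : ¬ ∃ c, c ∉ mkd m τ n ∧ Win m (shape (GSt.B o d e k) ∪ {c}) := by
    rintro ⟨c, h1, h2⟩
    refine hfire ⟨c, h1, ?_⟩
    rw [hmk]; exact h2
  have notmk : ∀ i j : ℤ, ((j ≠ 0 ∨ i < 0 ∨ (k:ℤ) ≤ i) ∧ ¬(i = (k:ℤ)-1 ∧ j = 1)) →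
      pt o d e i j ∉ mk m τ n := by
    intro i j hij hmem
    rw [hmk] at hmem
    rcases hmem with hmem | hmem
    · rw [mem_segP_pt hfr] at hmem; omega
    · rw [Set.mem_singleton_iff] at hmem
      obtain ⟨h1, h2⟩ := pt_inj hfr hmem
      exact hij.2 ⟨h1, h2⟩
  have hrowmem : ∀ t : ℤ, 0 ≤ t → t < (k:ℤ) → ∀ S : Set Cell,
      pt o d e t 0 ∈ mk m τ n ∪ S := by
    intro t h1 h2 S
    refine Or.inl ?_
    rw [hmk]
    exact Or.inl (by rw [← cellAt_eq_pt]; exact mem_segP_of h1 h2)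
  have hcorn : pt o d e ((k:ℤ)-1) 1 ∈ mk m τ n := by
    rw [hmk]; exact Or.inr rfl
  -- interior laterals forced
  have hint : ∀ i j : ℤ, 1 ≤ i → i ≤ (k:ℤ)-2 → (j = 1 ∨ j = -1) →
      pt o d e i j ∈ bf m τ n := by
    intro i j hi1 hi2 hj
    have hwin : Win m (mk m τ n ∪ {pt o d e i j}) := by
      rcases hj with rfl | rfl
      · refine win_T2 (o := cellAt o d (i-1)) hfr ?_ ?_ ?_ ?_ <;>
          rw [pt_rebase]
        · exact hrowmem (i-1+0) (by omega) (by omega) _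
        · exact hrowmem (i-1+1) (by omega) (by omega) _
        · exact hrowmem (i-1+2) (by omega) (by omega) _
        · exact Or.inr (by norm_num)
      · refine win_T2 (o := cellAt o d (i-1)) (frame_neg_right hfr) ?_ ?_ ?_ ?_ <;>
          rw [pt_rebase, pt_nege]
        · exact hrowmem (i-1+0) (by omega) (by omega) _
        · exact hrowmem (i-1+1) (by omega) (by omega) _
        · exact hrowmem (i-1+2) (by omega) (by omega) _
        · exact Or.inr (by norm_num)
    exact forced m τ hfire hwin (notmk i j (by constructor <;> omega))
  -- the four winning cells of the corner position are forced
  have hW1 : pt o d e 0 1 ∈ bf m τ n := by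
    refine forced m τ hfire ?_ (notmk 0 1 (by constructor <;> omega))
    refine win_C (o := o) hfr hk2 (fun i h1 h2 => hrowmem i h1 h2 _) (Or.inr rfl) ?_
    exact Or.inl hcorn
  have hW2 : pt o d e 0 (-1) ∈ bf m τ n := by
    refine forced m τ hfire ?_ (notmk 0 (-1) (by constructor <;> omega))
    refine win_Z (o := cellAt o d ((k:ℤ)-1)) (frame_neg_left hfr) hk2
      (fun i h1 h2 => ?_) ?_ ?_
    · have : pt (cellAt o d ((k:ℤ)-1)) (-d) e i 0 = pt o d e ((k:ℤ)-1-i) 0 := by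
        refine Prod.ext ?_ ?_ <;>
          simp only [pt, cellAt, Prod.fst_neg, Prod.snd_neg] <;> ring
      rw [this]; exact hrowmem ((k:ℤ)-1-i) (by omega) (by omega) _
    · have : pt (cellAt o d ((k:ℤ)-1)) (-d) e 0 1 = pt o d e ((k:ℤ)-1) 1 := by
        refine Prod.ext ?_ ?_ <;>
          simp only [pt, cellAt, Prod.fst_neg, Prod.snd_neg] <;> ring
      rw [this]; exact Or.inl hcorn
    · have : pt (cellAt o d ((k:ℤ)-1)) (-d) e ((k:ℤ)-1) (-1) = pt o d e 0 (-1) := by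
        refine Prod.ext ?_ ?_ <;>
          simp only [pt, cellAt, Prod.fst_neg, Prod.snd_neg] <;> ring
      rw [this]; exact Or.inr rfl
  -- T2 through the corner column
  have hW3 : pt o d e ((k:ℤ)-1) (-1) ∈ bf m τ n := by
    refine forced m τ hfire ?_ (notmk ((k:ℤ)-1) (-1) (by constructor <;> omega))
    refine win_T2 (o := pt o d e ((k:ℤ)-1) 1) ⟨(frame_neg_right hfr).2.1,
      (frame_neg_left hfr).1, ?_⟩ ?_ ?_ ?_ ?_
    · have h3 := hfr.2.2; simp [Prod.fst_neg, Prod.snd_neg]; linarith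
    · refine Or.inl ?_
      have : pt (pt o d e ((k:ℤ)-1) 1) (-e) (-d) 0 0 = pt o d e ((k:ℤ)-1) 1 := by
        refine Prod.ext ?_ ?_ <;>
          simp only [pt, Prod.fst_neg, Prod.snd_neg] <;> ring
      rw [this]; exact hcorn
    · have : pt (pt o d e ((k:ℤ)-1) 1) (-e) (-d) 1 0 = pt o d e ((k:ℤ)-1) 0 := by
        refine Prod.ext ?_ ?_ <;>
          simp only [pt, Prod.fst_neg, Prod.snd_neg] <;> ring
      rw [this]; exact hrowmem ((k:ℤ)-1) (by omega) (by omega) _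
    · have : pt (pt o d e ((k:ℤ)-1) 1) (-e) (-d) 2 0 = pt o d e ((k:ℤ)-1) (-1) := by
        refine Prod.ext ?_ ?_ <;>
          simp only [pt, Prod.fst_neg, Prod.snd_neg] <;> ring
      rw [this]; exact Or.inr rfl
    · have : pt (pt o d e ((k:ℤ)-1) 1) (-e) (-d) 1 1 = pt o d e ((k:ℤ)-2) 0 := by
        refine Prod.ext ?_ ?_ <;>
          simp only [pt, Prod.fst_neg, Prod.snd_neg] <;> ring
      rw [this]; exact hrowmem ((k:ℤ)-2) (by omega) (by omega) _
  -- diagonal S-tetromino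
  have hW4 : pt o d e (k:ℤ) 1 ∈ bf m τ n := by
    refine forced m τ hfire ?_ (notmk (k:ℤ) 1 (by constructor <;> omega))
    refine win_Z (o := pt o d e ((k:ℤ)-1) 1) ⟨(frame_neg_right hfr).2.1, hfr.1, ?_⟩
      (le_refl 2) (fun i h1 h2 => ?_) ?_ ?_
    · have h3 := hfr.2.2; simp [Prod.fst_neg, Prod.snd_neg]; linarith
    · have hi : i = 0 ∨ i = 1 := by omega
      rcases hi with rfl | rfl
      · have : pt (pt o d e ((k:ℤ)-1) 1) (-e) d 0 0 = pt o d e ((k:ℤ)-1) 1 := by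
          refine Prod.ext ?_ ?_ <;>
            simp only [pt, Prod.fst_neg, Prod.snd_neg] <;> ring
        rw [this]; exact Or.inl hcorn
      · have : pt (pt o d e ((k:ℤ)-1) 1) (-e) d 1 0 = pt o d e ((k:ℤ)-1) 0 := by
          refine Prod.ext ?_ ?_ <;>
            simp only [pt, Prod.fst_neg, Prod.snd_neg] <;> ring
        rw [this]; exact hrowmem ((k:ℤ)-1) (by omega) (by omega) _
    · have : pt (pt o d e ((k:ℤ)-1) 1) (-e) d 0 1 = pt o d e (k:ℤ) 1 := by
        refine Prod.ext ?_ ?_ <;>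
          simp only [pt, Prod.fst_neg, Prod.snd_neg] <;> ring
      rw [this]; exact Or.inr rfl
    · have : pt (pt o d e ((k:ℤ)-1) 1) (-e) d (((2:ℕ):ℤ)-1) (-1) = pt o d e ((k:ℤ)-2) 0 := by
        refine Prod.ext ?_ ?_ <;>
          simp only [pt, Prod.fst_neg, Prod.snd_neg] <;> push_cast <;> ring
      rw [this]; exact hrowmem ((k:ℤ)-2) (by omega) (by omega) _
  -- the breaker's cells are exactly the image of idxB
  have hball : ∀ q ∈ idxB k, pt o d e q.1 q.2 ∈ bf m τ n := by
    intro q hq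
    rw [idxB, Finset.mem_union] at hq
    rcases hq with hq | hq
    · obtain ⟨hq1, hq2⟩ := Finset.mem_product.mp hq
      rw [Finset.mem_Icc] at hq1
      simp only [Finset.mem_insert, Finset.mem_singleton] at hq2
      exact hint q.1 q.2 hq1.1 hq1.2 (by tauto)
    · simp only [Finset.mem_insert, Finset.mem_singleton] at hq
      rcases hq with rfl|rfl|rfl|rfl|rfl|rfl
      · rw [← cellAt_eq_pt]; exact hcapL
      · rw [← cellAt_eq_pt]; exact hcapR
      · exact hW1
      · exact hW2
      · exact hW3
      · exact hW4
  have hbfcard : (bf m τ n).card = 2*k + 2 := by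
    rw [bf_card m τ hτ n, hnk]; ring
  have heqbf : (idxB k).image (fun q : ℤ×ℤ => pt o d e q.1 q.2) = bf m τ n := by
    refine Finset.eq_of_subset_of_card_le ?_ ?_
    · intro x hx
      rw [Finset.mem_image] at hx
      obtain ⟨q, hq, rfl⟩ := hx
      exact hball q hq
    · rw [hbfcard, Finset.card_image_of_injOn, card_idxB hk2]
      intro q1 _ q2 _ hq
      obtain ⟨h1', h2'⟩ := pt_inj hfr hq
      exact Prod.ext h1' h2'
  have hfresh : ∀ i j : ℤ, ((i,j) ∉ idxB k) → pt o d e i j ∉ bf m τ n := by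
    intro i j hij hmem
    rw [← heqbf, Finset.mem_image] at hmem
    obtain ⟨q, hq, heq'⟩ := hmem
    obtain ⟨h1', h2'⟩ := pt_inj hfr heq'
    exact hij (by rw [← h1', ← h2']; exact (by simpa using hq))
  have hmvfree : pt o d e ((k:ℤ)-1) 2 ∉ mkd m τ n := by
    rw [mkd_eq]
    rintro (h | h)
    · exact notmk ((k:ℤ)-1) 2 (by constructor <;> omega) h
    · exact hfresh ((k:ℤ)-1) 2 (not_mem_idxB (by omega)) h
  have heval : step m (stN m τ n) (mkd m τ n) =
      (pt o d e ((k:ℤ)-1) 2, .C o d e k 3) := by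
    rw [hst, step, dif_neg hcond]
    simp only [if_pos hmvfree]
  have hmv : mvM m τ n = pt o d e ((k:ℤ)-1) 2 := by rw [mvM_eq, heval]
  -- establish the C-state invariant
  refine Or.inr (Or.inr (Or.inr (Or.inr
    ⟨o, d, e, k, 3, hfr, ?_, hk2, le_refl 3, by omega, ?_, ?_⟩)))
  · rw [stN_succ, heval]
  · -- maker's cells form the L-shape
    rw [mk_succ, hmv, hmk, segP_three, pt_arm, pt_arm, pt_arm]
    ext c
    simp only [Set.mem_union, Set.mem_insert_iff, Set.mem_singleton_iff]
    constructor
    · rintro ((h | h) | h) <;> tauto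
    · rintro (h | (h | h | h))
      · tauto
      · refine Or.inl (Or.inl ?_)
        rw [h, ← cellAt_eq_pt]
        exact mem_segP_of (by omega) (by omega)
      · tauto
      · tauto
  · -- the forward strip is clean, or a win is available
    by_cases hw : ∃ c, c ∉ mkd m τ (n+1) ∧ Win m (mk m τ (n+1) ∪ {c})
    · exact Or.inr hw
    refine Or.inl ?_
    push_neg at hw
    -- membership in the new maker set
    have hmkmem : ∀ j : ℤ, 0 ≤ j → j ≤ 2 → ∀ S : Set Cell,
        pt o d e ((k:ℤ)-1) j ∈ mk m τ (n+1) ∪ S := by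
      intro j h0 h2 S
      refine Or.inl ?_
      rw [mk_succ, hmv, hmk]
      have : j = 0 ∨ j = 1 ∨ j = 2 := by omega
      rcases this with rfl | rfl | rfl
      · exact Or.inl (Or.inl (by rw [← cellAt_eq_pt]; exact mem_segP_of (by omega) (by omega)))
      · exact Or.inl (Or.inr rfl)
      · exact Or.inr rfl
    have hrowmem' : ∀ t : ℤ, 0 ≤ t → t < (k:ℤ) → ∀ S : Set Cell,
        pt o d e t 0 ∈ mk m τ (n+1) ∪ S := by
      intro t h1 h2 S
      refine Or.inl ?_
      rw [mk_succ, hmv, hmk]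
      exact Or.inl (Or.inl (by rw [← cellAt_eq_pt]; exact mem_segP_of h1 h2))
    have hfr' : Frame e (-d) := frame_neg_right (frame_swap hfr)
    have hWu : Win m (mk m τ (n+1) ∪ {pt o d e ((k:ℤ)-2) 2}) := by
      refine win_C (o := cellAt o d ((k:ℤ)-1)) (n := 3) hfr' (by omega) (fun i h1 h2 => ?_) ?_ ?_
      · have : pt (cellAt o d ((k:ℤ)-1)) e (-d) i 0 = pt o d e ((k:ℤ)-1) i := by
          refine Prod.ext ?_ ?_ <;>
            simp only [pt, cellAt, Prod.fst_neg, Prod.snd_neg] <;> ring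
        rw [this]; exact hmkmem i h1 (by omega) _
      · have : pt (cellAt o d ((k:ℤ)-1)) e (-d) 0 1 = pt o d e ((k:ℤ)-2) 0 := by
          refine Prod.ext ?_ ?_ <;>
            simp only [pt, cellAt, Prod.fst_neg, Prod.snd_neg] <;> ring
        rw [this]; exact hrowmem' ((k:ℤ)-2) (by omega) (by omega) _
      · have : pt (cellAt o d ((k:ℤ)-1)) e (-d) (((3:ℕ):ℤ)-1) 1 = pt o d e ((k:ℤ)-2) 2 := by
          refine Prod.ext ?_ ?_ <;>
            simp only [pt, cellAt, Prod.fst_neg, Prod.snd_neg] <;> push_cast <;> ring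
        rw [this]; exact Or.inr rfl
    have hWv : Win m (mk m τ (n+1) ∪ {pt o d e (k:ℤ) 2}) := by
      refine win_Z (o := cellAt o d ((k:ℤ)-1)) (n := 3) hfr' (by omega) (fun i h1 h2 => ?_) ?_ ?_
      · have : pt (cellAt o d ((k:ℤ)-1)) e (-d) i 0 = pt o d e ((k:ℤ)-1) i := by
          refine Prod.ext ?_ ?_ <;>
            simp only [pt, cellAt, Prod.fst_neg, Prod.snd_neg] <;> ring
        rw [this]; exact hmkmem i h1 (by omega) _
      · have : pt (cellAt o d ((k:ℤ)-1)) e (-d) 0 1 = pt o d e ((k:ℤ)-2) 0 := by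
          refine Prod.ext ?_ ?_ <;>
            simp only [pt, cellAt, Prod.fst_neg, Prod.snd_neg] <;> ring
        rw [this]; exact hrowmem' ((k:ℤ)-2) (by omega) (by omega) _
      · have : pt (cellAt o d ((k:ℤ)-1)) e (-d) (((3:ℕ):ℤ)-1) (-1) = pt o d e (k:ℤ) 2 := by
          refine Prod.ext ?_ ?_ <;>
            simp only [pt, cellAt, Prod.fst_neg, Prod.snd_neg] <;> push_cast <;> ring
        rw [this]; exact Or.inr rfl
    have hnotmk1 : ∀ i j : ℤ, ((j ≠ 0 ∨ i < 0 ∨ (k:ℤ) ≤ i) ∧ ¬(i = (k:ℤ)-1 ∧ 0 ≤ j ∧ j ≤ 2)) →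
        pt o d e i j ∉ mk m τ (n+1) := by
      intro i j hij hmem
      rw [mk_succ, hmv, hmk] at hmem
      rcases hmem with (hmem | hmem) | hmem
      · rw [mem_segP_pt hfr] at hmem; omega
      · rw [Set.mem_singleton_iff] at hmem
        obtain ⟨h1', h2'⟩ := pt_inj hfr hmem
        exact hij.2 ⟨h1', by omega⟩
      · rw [Set.mem_singleton_iff] at hmem
        obtain ⟨h1', h2'⟩ := pt_inj hfr hmem
        exact hij.2 ⟨h1', by omega⟩
    have hnotidx : ∀ i j : ℤ, 2 ≤ j → ((i,j) ∉ idxB k) := fun i j hj => not_mem_idxB hj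
    have hu : pt o d e ((k:ℤ)-2) 2 ∈ ({(mvB m τ n).1, (mvB m τ n).2} : Set Cell) := by
      have hmem : pt o d e ((k:ℤ)-2) 2 ∈ mkd m τ (n+1) := by
        by_contra hc
        exact (hw _ hc) hWu
      rw [mkd_eq] at hmem
      rcases hmem with hmem | hmem
      · exact absurd hmem (hnotmk1 _ _ (by constructor; · omega
                                           · rintro ⟨h1', _⟩; omega))
      · rw [Finset.mem_coe, bf_succ_fin] at hmem
        simp only [Finset.mem_insert, Finset.mem_singleton] at hmem
        rcases hmem with h | h | h
        · exact Or.inl h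
        · exact Or.inr h
        · exact absurd h (hfresh _ _ (hnotidx _ _ (by omega)))
    have hv : pt o d e (k:ℤ) 2 ∈ ({(mvB m τ n).1, (mvB m τ n).2} : Set Cell) := by
      have hmem : pt o d e (k:ℤ) 2 ∈ mkd m τ (n+1) := by
        by_contra hc
        exact (hw _ hc) hWv
      rw [mkd_eq] at hmem
      rcases hmem with hmem | hmem
      · exact absurd hmem (hnotmk1 _ _ (by constructor; · omega
                                           · rintro ⟨h1', _⟩; omega))
      · rw [Finset.mem_coe, bf_succ_fin] at hmem
        simp only [Finset.mem_insert, Finset.mem_singleton] at hmem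
        rcases hmem with h | h | h
        · exact Or.inl h
        · exact Or.inr h
        · exact absurd h (hfresh _ _ (hnotidx _ _ (by omega)))
    -- now the strip above level 3 is untouched
    intro i j hi1 hi2 hj hmem
    rw [bf_succ_fin] at hmem
    simp only [Finset.mem_insert, Finset.mem_singleton] at hmem
    have h1u : pt o d e i j ≠ pt o d e ((k:ℤ)-2) 2 := by
      intro hx; obtain ⟨h1', h2'⟩ := pt_inj hfr hx; omega
    have h1v : pt o d e i j ≠ pt o d e (k:ℤ) 2 := by
      intro hx; obtain ⟨h1', h2'⟩ := pt_inj hfr hx; omega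
    have huvne : pt o d e ((k:ℤ)-2) 2 ≠ pt o d e (k:ℤ) 2 := by
      intro hx; obtain ⟨h1', h2'⟩ := pt_inj hfr hx; omega
    rcases hmem with h | h | h
    · rcases hu with hu | hu
      · exact h1u (by rw [h, ← hu])
      · rcases hv with hv | hv
        · exact h1v (by rw [h, ← hv])
        · exact huvne (by rw [hu, ← hv])
    · rcases hu with hu | hu
      · rcases hv with hv | hv
        · exact huvne (by rw [hu, ← hv])
        · exact h1v (by rw [h, ← hv])
      · exact h1u (by rw [h, ← hu])
    · exact hfresh _ _ (hnotidx _ _ (by omega)) h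

end Game
end Stmt4
namespace Stmt4

section Game
variable (m : ℕ) (τ : BStrategy)

lemma stepC (hτ : BLegal τ) {n : ℕ} (hC : InvC m τ n) : Inv m τ (n+1) := by
  obtain ⟨o, d, e, a, b, hfr, hst, ha2, hb3, hnab, hmk, hD⟩ := hC
  have hsh : shape (stN m τ n) = mk m τ n := by rw [hst]; exact hmk.symm
  by_cases hfire : ∃ c, c ∉ mkd m τ n ∧ Win m (mk m τ n ∪ {c})
  · exact Or.inl (fire_case m τ hsh hfire)
  have hstrip : ∀ i j : ℤ, (a:ℤ) - 2 ≤ i → i ≤ (a:ℤ) → (b:ℤ) ≤ j →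
      pt o d e i j ∉ bf m τ n := by
    rcases hD with hD | hD
    · exact hD
    · exact absurd hD hfire
  have hcond : ¬ ∃ c, c ∉ mkd m τ n ∧ Win m (shape (GSt.C o d e a b) ∪ {c}) := by
    rintro ⟨c, h1, h2⟩
    refine hfire ⟨c, h1, ?_⟩
    rw [hmk]; exact h2
  have notmk : ∀ i j : ℤ, ((j ≠ 0 ∨ i < 0 ∨ (a:ℤ) ≤ i) ∧ ¬(i = (a:ℤ)-1 ∧ 0 ≤ j ∧ j < (b:ℤ))) →
      pt o d e i j ∉ mk m τ n := by
    intro i j hij hmem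
    rw [hmk] at hmem
    rcases hmem with hmem | hmem
    · rw [mem_segP_pt hfr] at hmem; omega
    · rw [mem_arm_pt hfr] at hmem
      exact hij.2 ⟨hmem.1, hmem.2.1, hmem.2.2⟩
  have hmvfree : pt o d e ((a:ℤ)-1) (b:ℤ) ∉ mkd m τ n := by
    rw [mkd_eq]
    rintro (h | h)
    · exact notmk ((a:ℤ)-1) (b:ℤ) ⟨Or.inl (by omega), by rintro ⟨_, _, hlt⟩; omega⟩ h
    · exact hstrip ((a:ℤ)-1) (b:ℤ) (by omega) (by omega) (by omega) h
  have heval : step m (stN m τ n) (mkd m τ n) =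
      (pt o d e ((a:ℤ)-1) (b:ℤ), .C o d e a (b+1)) := by
    rw [hst, step, dif_neg hcond]
    simp only [if_pos hmvfree]
  have hmv : mvM m τ n = pt o d e ((a:ℤ)-1) (b:ℤ) := by rw [mvM_eq, heval]
  have hmk1 : mk m τ (n+1) = segP o d a ∪ segP (cellAt o d ((a:ℤ)-1)) e (b+1) := by
    rw [mk_succ, hmv, hmk, segP_succ, pt_arm, Set.union_assoc]
  refine Or.inr (Or.inr (Or.inr (Or.inr
    ⟨o, d, e, a, b+1, hfr, ?_, ha2, by omega, by omega, hmk1, ?_⟩)))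
  · rw [stN_succ, heval]
  · by_cases hw : ∃ c, c ∉ mkd m τ (n+1) ∧ Win m (mk m τ (n+1) ∪ {c})
    · exact Or.inr hw
    refine Or.inl ?_
    push_neg at hw
    have hmkmem : ∀ j : ℤ, 0 ≤ j → j ≤ (b:ℤ) → ∀ S : Set Cell,
        pt o d e ((a:ℤ)-1) j ∈ mk m τ (n+1) ∪ S := by
      intro j h0 h2 S
      refine Or.inl ?_
      rw [hmk1]
      refine Or.inr ?_
      rw [← pt_arm]
      exact mem_segP_of h0 (by push_cast; omega)
    have hrowmem' : ∀ t : ℤ, 0 ≤ t → t < (a:ℤ) → ∀ S : Set Cell,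
        pt o d e t 0 ∈ mk m τ (n+1) ∪ S := by
      intro t h1 h2 S
      refine Or.inl ?_
      rw [hmk1]
      exact Or.inl (by rw [← cellAt_eq_pt]; exact mem_segP_of h1 h2)
    have hfr' : Frame e (-d) := frame_neg_right (frame_swap hfr)
    have hWu : Win m (mk m τ (n+1) ∪ {pt o d e ((a:ℤ)-2) (b:ℤ)}) := by
      refine win_C (o := cellAt o d ((a:ℤ)-1)) (n := b+1) hfr' (by omega)
        (fun i h1 h2 => ?_) ?_ ?_
      · have : pt (cellAt o d ((a:ℤ)-1)) e (-d) i 0 = pt o d e ((a:ℤ)-1) i := by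
          refine Prod.ext ?_ ?_ <;>
            simp only [pt, cellAt, Prod.fst_neg, Prod.snd_neg] <;> ring
        rw [this]; exact hmkmem i h1 (by push_cast at h2 ⊢; omega) _
      · have : pt (cellAt o d ((a:ℤ)-1)) e (-d) 0 1 = pt o d e ((a:ℤ)-2) 0 := by
          refine Prod.ext ?_ ?_ <;>
            simp only [pt, cellAt, Prod.fst_neg, Prod.snd_neg] <;> ring
        rw [this]; exact hrowmem' ((a:ℤ)-2) (by omega) (by omega) _
      · have : pt (cellAt o d ((a:ℤ)-1)) e (-d) (((b+1:ℕ):ℤ)-1) 1 =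
            pt o d e ((a:ℤ)-2) (b:ℤ) := by
          refine Prod.ext ?_ ?_ <;>
            simp only [pt, cellAt, Prod.fst_neg, Prod.snd_neg] <;> push_cast <;> ring
        rw [this]; exact Or.inr rfl
    have hWv : Win m (mk m τ (n+1) ∪ {pt o d e (a:ℤ) (b:ℤ)}) := by
      refine win_Z (o := cellAt o d ((a:ℤ)-1)) (n := b+1) hfr' (by omega)
        (fun i h1 h2 => ?_) ?_ ?_
      · have : pt (cellAt o d ((a:ℤ)-1)) e (-d) i 0 = pt o d e ((a:ℤ)-1) i := by
          refine Prod.ext ?_ ?_ <;>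
            simp only [pt, cellAt, Prod.fst_neg, Prod.snd_neg] <;> ring
        rw [this]; exact hmkmem i h1 (by push_cast at h2 ⊢; omega) _
      · have : pt (cellAt o d ((a:ℤ)-1)) e (-d) 0 1 = pt o d e ((a:ℤ)-2) 0 := by
          refine Prod.ext ?_ ?_ <;>
            simp only [pt, cellAt, Prod.fst_neg, Prod.snd_neg] <;> ring
        rw [this]; exact hrowmem' ((a:ℤ)-2) (by omega) (by omega) _
      · have : pt (cellAt o d ((a:ℤ)-1)) e (-d) (((b+1:ℕ):ℤ)-1) (-1) =
            pt o d e (a:ℤ) (b:ℤ) := by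
          refine Prod.ext ?_ ?_ <;>
            simp only [pt, cellAt, Prod.fst_neg, Prod.snd_neg] <;> push_cast <;> ring
        rw [this]; exact Or.inr rfl
    have hnotmk1 : ∀ i j : ℤ,
        ((j ≠ 0 ∨ i < 0 ∨ (a:ℤ) ≤ i) ∧ ¬(i = (a:ℤ)-1 ∧ 0 ≤ j ∧ j < (b:ℤ)+1)) →
        pt o d e i j ∉ mk m τ (n+1) := by
      intro i j hij hmem
      rw [hmk1] at hmem
      rcases hmem with hmem | hmem
      · rw [mem_segP_pt hfr] at hmem; omega
      · rw [mem_arm_pt hfr] at hmem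
        push_cast at hmem
        exact hij.2 ⟨hmem.1, hmem.2.1, by omega⟩
    have hu : pt o d e ((a:ℤ)-2) (b:ℤ) ∈ ({(mvB m τ n).1, (mvB m τ n).2} : Set Cell) := by
      have hmem : pt o d e ((a:ℤ)-2) (b:ℤ) ∈ mkd m τ (n+1) := by
        by_contra hc
        exact (hw _ hc) hWu
      rw [mkd_eq] at hmem
      rcases hmem with hmem | hmem
      · exact absurd hmem (hnotmk1 _ _ ⟨Or.inl (by omega), by rintro ⟨h1', _⟩; omega⟩)
      · rw [Finset.mem_coe, bf_succ_fin] at hmem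
        simp only [Finset.mem_insert, Finset.mem_singleton] at hmem
        rcases hmem with h | h | h
        · exact Or.inl h
        · exact Or.inr h
        · exact absurd h (hstrip _ _ (by omega) (by omega) (by omega))
    have hv : pt o d e (a:ℤ) (b:ℤ) ∈ ({(mvB m τ n).1, (mvB m τ n).2} : Set Cell) := by
      have hmem : pt o d e (a:ℤ) (b:ℤ) ∈ mkd m τ (n+1) := by
        by_contra hc
        exact (hw _ hc) hWv
      rw [mkd_eq] at hmem
      rcases hmem with hmem | hmem
      · exact absurd hmem (hnotmk1 _ _ ⟨Or.inr (Or.inr (by omega)),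
          by rintro ⟨h1', _⟩; omega⟩)
      · rw [Finset.mem_coe, bf_succ_fin] at hmem
        simp only [Finset.mem_insert, Finset.mem_singleton] at hmem
        rcases hmem with h | h | h
        · exact Or.inl h
        · exact Or.inr h
        · exact absurd h (hstrip _ _ (by omega) (by omega) (by omega))
    intro i j hi1 hi2 hj hmem
    rw [bf_succ_fin] at hmem
    simp only [Finset.mem_insert, Finset.mem_singleton] at hmem
    have h1u : pt o d e i j ≠ pt o d e ((a:ℤ)-2) (b:ℤ) := by
      intro hx; obtain ⟨h1', h2'⟩ := pt_inj hfr hx; push_cast at hj; omega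
    have h1v : pt o d e i j ≠ pt o d e (a:ℤ) (b:ℤ) := by
      intro hx; obtain ⟨h1', h2'⟩ := pt_inj hfr hx; push_cast at hj; omega
    have huvne : pt o d e ((a:ℤ)-2) (b:ℤ) ≠ pt o d e (a:ℤ) (b:ℤ) := by
      intro hx; obtain ⟨h1', h2'⟩ := pt_inj hfr hx; omega
    rcases hmem with h | h | h
    · rcases hu with hu | hu
      · exact h1u (by rw [h, ← hu])
      · rcases hv with hv | hv
        · exact h1v (by rw [h, ← hv])
        · exact huvne (by rw [hu, ← hv])
    · rcases hu with hu | hu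
      · rcases hv with hv | hv
        · exact huvne (by rw [hu, ← hv])
        · exact h1v (by rw [h, ← hv])
      · exact h1u (by rw [h, ← hu])
    · refine hstrip _ _ (by omega) (by omega) (by push_cast at hj ⊢; omega) h

lemma inv_step (hτ : BLegal τ) (n : ℕ) (h : Inv m τ n) : Inv m τ (n+1) := by
  rcases h with h | ⟨h0, hst⟩ | h | h | h
  · exact Or.inl (win_mono_mk m τ h)
  · exact stepI m τ h0 hst
  · exact stepA m τ hτ h
  · exact stepB m τ hτ h
  · exact stepC m τ hτ h

lemma inv_all (hτ : BLegal τ) (n : ℕ) : Inv m τ n := by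
  induction n with
  | zero => exact inv_zero m τ
  | succ n ih => exact inv_step m τ hτ n ih

/-- at round 2m+4 the maker has won. -/
lemma win_final (hτ : BLegal τ) : ∃ n, Win m (mk m τ n) := by
  have h := inv_all m τ hτ (2*m+4)
  rcases h with h | ⟨h0, _⟩ | h | h | h
  · exact ⟨2*m+4, h⟩
  · omega
  · obtain ⟨o, d, hd, _, _, hmk⟩ := h
    exact ⟨2*m+4, win_S_sub (o := o) hd (by omega) (le_of_eq hmk.symm)⟩
  · obtain ⟨o, d, e, k, hfr, _, hk2, hnk, hmk, _, _⟩ := h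
    refine ⟨2*m+4, win_S_sub (o := o) hfr.1 (n := k) (by omega) ?_⟩
    rw [hmk]; exact Set.subset_union_left
  · obtain ⟨o, d, e, a, b, hfr, _, ha2, hb3, hnab, hmk, _⟩ := h
    by_cases hab : m ≤ a
    · refine ⟨2*m+4, win_S_sub (o := o) hfr.1 hab ?_⟩
      rw [hmk]; exact Set.subset_union_left
    · refine ⟨2*m+4, win_S_sub (o := cellAt o d ((a:ℤ)-1)) hfr.2.1 (n := b) (by omega) ?_⟩
      rw [hmk]; exact Set.subset_union_right

end Game
end Stmt4
namespace Stmt4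

lemma ancestor_trans {P Q R : Set Cell} (h1 : Ancestor P Q) (h2 : Ancestor Q R) :
    Ancestor P R := by
  obtain ⟨S1, hS1, g, hg, hg2⟩ := h1
  obtain ⟨S2, hS2, k, hk, hk2⟩ := h2
  refine ⟨k '' S1, ?_, k ∘ g, isSym_comp hk hg, by rw [Set.image_comp, hg2]⟩
  intro x hx
  obtain ⟨y, hy, rfl⟩ := hx
  exact hS2 (hk2 ▸ Set.mem_image_of_mem k (hS1 hy))

lemma isSym_adj {g : Cell → Cell} (hg : IsSym g) {x y : Cell} (h : Adjacent x y) :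
    Adjacent (g x) (g y) := by
  rw [isSym_iff] at hg
  obtain ⟨t, ε, δ, s, hε, hδ, rfl⟩ := hg
  exact mySym_adj hε hδ h

lemma srow_eq_segP (m : ℕ) : Srow m = segP (0,0) (1,0) m := by
  ext p
  simp only [Srow, Set.mem_setOf_eq, segP]
  constructor
  · rintro ⟨h1, h2, h3⟩
    exact ⟨p.1, h1, h2, by refine Prod.ext ?_ ?_ <;> simp [cellAt, h3]⟩
  · rintro ⟨i, h1, h2, rfl⟩
    exact ⟨by simpa [cellAt] using h1, by simpa [cellAt] using h2, by simp [cellAt]⟩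

lemma isSym_image_segP {g : Cell → Cell} (hg : IsSym g) (o d : Cell) (n : ℕ)
    (hd : IsDir d) : ∃ o' d', IsDir d' ∧ g '' segP o d n = segP o' d' n := by
  rw [isSym_iff] at hg
  obtain ⟨t, ε, δ, s, hε, hδ, rfl⟩ := hg
  refine ⟨mySym t ε δ s o, (ε * (if s then d.2 else d.1), δ * (if s then d.1 else d.2)),
    ?_, ?_⟩
  · rcases hd with h|h|h|h <;> rcases hε with h1|h1 <;> rcases hδ with h2|h2 <;>
      subst h <;> subst h1 <;> subst h2 <;> cases s <;> simp [IsDir] <;> tauto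
  · have key : ∀ i : ℤ, mySym t ε δ s (cellAt o d i) =
        cellAt (mySym t ε δ s o)
          (ε * (if s then d.2 else d.1), δ * (if s then d.1 else d.2)) i := by
      intro i
      refine Prod.ext ?_ ?_ <;> cases s <;> simp [mySym, cellAt] <;> ring
    ext c
    constructor
    · rintro ⟨p, ⟨i, h1, h2, rfl⟩, rfl⟩
      rw [key]
      exact ⟨i, h1, h2, rfl⟩
    · rintro ⟨i, h1, h2, rfl⟩
      exact ⟨cellAt o d i, ⟨i, h1, h2, rfl⟩, (key i)⟩

/-- every finite polyomino ancestor of the half-infinite strip is (congruent to) a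
segment, and hence is an ancestor of any set containing a segment of that length. -/
lemma sinf_anc {P : Set Cell} (hfin : P.Finite) (hpoly : IsPolyomino P)
    (hanc : Ancestor P Sinf) :
    ∃ m : ℕ, 1 ≤ m ∧ ∀ (o d : Cell), IsDir d → ∀ M : Set Cell,
      segP o d m ⊆ M → Ancestor P M := by
  obtain ⟨S, hSsub, g, hg, hgP⟩ := hanc
  have hSfin : S.Finite := hgP ▸ (hfin.image g)
  have hSne : S.Nonempty := hgP ▸ (hpoly.1.image g)
  -- all cells of S lie on the nonnegative x-axis
  have hline : ∀ p ∈ S, p.2 = 0 ∧ 0 ≤ p.1 := fun p hp => ⟨(hSsub hp).2, (hSsub hp).1⟩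
  -- connectivity of S
  have hmapped : ∀ p q : Cell,
      Relation.ReflTransGen (fun x y => x ∈ P ∧ y ∈ P ∧ Adjacent x y) p q →
      Relation.ReflTransGen (fun x y => x ∈ S ∧ y ∈ S ∧ Adjacent x y) (g p) (g q) := by
    intro p q hpq
    induction hpq with
    | refl => exact Relation.ReflTransGen.refl
    | tail h1 h2 ih =>
      exact Relation.ReflTransGen.tail ih
        ⟨hgP ▸ Set.mem_image_of_mem g h2.1, hgP ▸ Set.mem_image_of_mem g h2.2.1,
          isSym_adj hg h2.2.2⟩
  have hconn : ∀ u ∈ S, ∀ v ∈ S,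
      Relation.ReflTransGen (fun x y => x ∈ S ∧ y ∈ S ∧ Adjacent x y) u v := by
    intro u hu v hv
    have hu' : u ∈ g '' P := hgP ▸ hu
    have hv' : v ∈ g '' P := hgP ▸ hv
    obtain ⟨p, hp, rfl⟩ := hu'
    obtain ⟨q, hq, rfl⟩ := hv'
    exact hmapped p q (hpoly.2 p hp q hq)
  -- intermediate cells along a path are present
  have hiv : ∀ u v : Cell,
      Relation.ReflTransGen (fun x y => x ∈ S ∧ y ∈ S ∧ Adjacent x y) u v →
      u ∈ S → ∀ x : ℤ, u.1 ≤ x → x ≤ v.1 → (x, 0) ∈ S := by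
    intro u v h hu
    induction h with
    | refl =>
      intro x h1 h2
      have := hline u hu
      have hx : x = u.1 := by omega
      subst hx
      have : u = (u.1, (0:ℤ)) := by
        refine Prod.ext rfl ?_
        simp [this.1]
      rwa [← this]
    | @tail w v h1 h2 ih =>
      intro x hx1 hx2
      have hwS := h2.1
      have hvS := h2.2.1
      have hwl := hline w hwS
      have hvl := hline v hvS
      have hadj := h2.2.2
      rw [Adjacent] at hadj
      have hdiff : v.1 = w.1 + 1 ∨ v.1 = w.1 - 1 := by
        have h2' : w.2 - v.2 = 0 := by omega
        rw [h2'] at hadj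
        simp at hadj
        omega
      by_cases hxw : x ≤ w.1
      · exact ih x hx1 hxw
      · have : x = v.1 := by omega
        subst this
        have : v = (v.1, (0:ℤ)) := by
          refine Prod.ext rfl ?_
          simp [hvl.1]
        rwa [← this]
  -- extract min and max x-coordinates
  have hnefin : (hSfin.toFinset.image Prod.fst).Nonempty := by
    rw [Finset.image_nonempty, Set.Finite.toFinset_nonempty]
    exact hSne
  set a := (hSfin.toFinset.image Prod.fst).min' hnefin with ha
  set b := (hSfin.toFinset.image Prod.fst).max' hnefin with hb
  have hab : a ≤ b := Finset.min'_le _ _ ((hSfin.toFinset.image Prod.fst).max'_mem hnefin)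
  have haS : (a, (0:ℤ)) ∈ S := by
    have := (hSfin.toFinset.image Prod.fst).min'_mem hnefin
    rw [Finset.mem_image] at this
    obtain ⟨p, hp, hpa⟩ := this
    rw [Set.Finite.mem_toFinset] at hp
    have hl := hline p hp
    have : p = (a, (0:ℤ)) := by
      refine Prod.ext ?_ ?_ <;> simp [hpa, hl.1, ha]
    rwa [← this]
  have hbS : (b, (0:ℤ)) ∈ S := by
    have := (hSfin.toFinset.image Prod.fst).max'_mem hnefin
    rw [Finset.mem_image] at this
    obtain ⟨p, hp, hpa⟩ := this
    rw [Set.Finite.mem_toFinset] at hp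
    have hl := hline p hp
    have : p = (b, (0:ℤ)) := by
      refine Prod.ext ?_ ?_ <;> simp [hpa, hl.1, hb]
    rwa [← this]
  have hbounds : ∀ p ∈ S, a ≤ p.1 ∧ p.1 ≤ b := by
    intro p hp
    constructor
    · exact Finset.min'_le _ _ (Finset.mem_image_of_mem Prod.fst
        ((Set.Finite.mem_toFinset hSfin).mpr hp))
    · exact Finset.le_max' _ _ (Finset.mem_image_of_mem Prod.fst
        ((Set.Finite.mem_toFinset hSfin).mpr hp))
  have hSeq : S = {p : Cell | p.2 = 0 ∧ a ≤ p.1 ∧ p.1 ≤ b} := by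
    ext p
    constructor
    · intro hp
      exact ⟨(hline p hp).1, hbounds p hp⟩
    · rintro ⟨h1, h2, h3⟩
      have : p = (p.1, (0:ℤ)) := Prod.ext rfl (by simp [h1])
      rw [this]
      exact hiv (a, 0) (b, 0) (hconn _ haS _ hbS) haS p.1 h2 h3
  refine ⟨(b - a + 1).toNat, by omega, ?_⟩
  intro o d hd M hM
  set h : Cell → Cell := (fun q : Cell => pt (cellAt o d (-a)) d (rot d) q.1 q.2) ∘ g
    with hh
  have hsym : IsSym h := isSym_comp (isSym_pt (frame_rot hd) _) hg
  refine ⟨h '' P, ?_, h, hsym, rfl⟩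
  rw [hh, Set.image_comp, hgP, hSeq]
  rintro c ⟨p, ⟨h1, h2, h3⟩, rfl⟩
  refine hM ?_
  have : (fun q : Cell => pt (cellAt o d (-a)) d (rot d) q.1 q.2) p =
      cellAt o d (p.1 - a) := by
    refine Prod.ext ?_ ?_ <;> simp [pt, cellAt, h1] <;> ring
  rw [this]
  exact mem_segP_of (by omega) (by rw [Int.toNat_of_nonneg (by omega)]; omega)

/-- every bounded restriction of Wteam is a game winner -/
lemma main_glue : ∀ G, BoundedRestriction Wteam G → GameWinner G := by
  rintro G ⟨f, hf, rfl⟩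
  have hSinf_mem : Sinf ∈ Wteam := Or.inl (Or.inl (Or.inl rfl))
  have hT2_mem : T2 ∈ Wteam := Or.inl (Or.inl (Or.inr rfl))
  obtain ⟨hfin, hpoly, hanc⟩ := hf Sinf hSinf_mem
  obtain ⟨m, hm1, hanc'⟩ := sinf_anc hfin hpoly hanc
  refine ⟨strat m, strat_legal m, fun τ hτ => ?_⟩
  obtain ⟨n, hwin⟩ := win_final m τ hτ
  obtain ⟨Q, hQ, hQanc⟩ := hwin
  rcases hQ with ((hQ | hQ) | ⟨n₀, hn₀, rfl⟩) | ⟨n₀, hn₀, rfl⟩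
  · -- Q = Srow m
    rw [hQ] at hQanc
    obtain ⟨S, hSsub, g, hg, hgeq⟩ := hQanc
    rw [srow_eq_segP] at hgeq
    obtain ⟨o', d', hd', himg⟩ := isSym_image_segP hg (0,0) (1,0) m (Or.inl rfl)
    refine ⟨n, f Sinf, ⟨Sinf, hSinf_mem, rfl⟩, ?_⟩
    refine hanc' o' d' hd' _ ?_
    rw [← himg, hgeq]
    exact hSsub
  · rw [hQ] at hQanc
    exact ⟨n, f T2, ⟨T2, hT2_mem, rfl⟩, ancestor_trans (hf T2 hT2_mem).2.2 hQanc⟩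
  · have hmem : Cpoly n₀ ∈ Wteam := Or.inl (Or.inr ⟨n₀, hn₀, rfl⟩)
    exact ⟨n, f (Cpoly n₀), ⟨Cpoly n₀, hmem, rfl⟩,
      ancestor_trans (hf _ hmem).2.2 hQanc⟩
  · have hmem : Zpoly n₀ ∈ Wteam := Or.inr ⟨n₀, hn₀, rfl⟩
    exact ⟨n, f (Zpoly n₀), ⟨Zpoly n₀, hmem, rfl⟩,
      ancestor_trans (hf _ hmem).2.2 hQanc⟩

lemma wteam_unbounded : ¬ Bounded Wteam := by
  intro h
  have hSinf_mem : Sinf ∈ Wteam := Or.inl (Or.inl (Or.inl rfl))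
  have hfin := h Sinf hSinf_mem
  have : Set.Infinite Sinf := by
    refine Set.infinite_of_injective_forall_mem
      (f := fun k : ℕ => (((k:ℤ), 0) : Cell)) ?_ ?_
    · intro x y hxy
      simpa using hxy
    · intro k
      exact ⟨by positivity, rfl⟩
  exact this hfin


theorem stmt4' : Winner Wteam ∧ ∀ G, BoundedRestriction Wteam G → GameWinner G :=
  ⟨Or.inr ⟨wteam_unbounded, main_glue⟩, main_glue⟩

end Stmt4

/-- the unbounded team `W = {S_∞, T_2} ∪ {C_n : n ≥ 2} ∪ {Z_n : n ≥ 2}` is a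
winner, i.e. every bounded restriction of `W` is a winner. -/
theorem stmt4 : Winner Wteam ∧ ∀ G, BoundedRestriction Wteam G → GameWinner G :=
  Stmt4.stmt4'
end

section
/- The teams {S_2}, {S_n, L_2} for every n ≥ 3, and {S_3, C_2, Z_2} are all winners in the weak (1,2)-achievement game. -/
namespace S5
set_option linter.unreachableTactic false
set_option linter.unusedTactic false

/-- marked cells as a list -/
def mlist (ms : List Cell) (bs : List (Cell × Cell)) : List Cell :=
  ms ++ bs.flatMap (fun p => [p.1, p.2])

lemma mem_markedCells {c : Cell} {ms bs} : c ∈ markedCells ms bs ↔ c ∈ mlist ms bs := by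
  simp [markedCells, mlist, List.mem_flatMap]

lemma mlist_length (ms bs) : (mlist ms bs).length = ms.length + 2 * bs.length := by
  simp [mlist]
  induction bs with
  | nil => simp
  | cons b bs ih => simp [ih]; omega

lemma le_foldr_max (x : ℤ) (l : List ℤ) (h : x ∈ l) : x ≤ l.foldr max 0 := by
  induction l with
  | nil => simp at h
  | cons a l ih =>
      rcases List.mem_cons.1 h with h | h
      · simp [h]
      · simp; exact Or.inr (ih h)

def freshCell (ms : List Cell) (bs : List (Cell × Cell)) : Cell :=
  (((mlist ms bs).map Prod.fst).foldr max 0 + 1, 0)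

lemma freshCell_not_mem (ms bs) : freshCell ms bs ∉ mlist ms bs := by
  intro h
  have := le_foldr_max (freshCell ms bs).1 _ (List.mem_map_of_mem (f := Prod.fst) h)
  simp [freshCell] at this

/-- pick the first free candidate, or a fresh cell -/
def pick (cands : List Cell) (ms : List Cell) (bs : List (Cell × Cell)) : Cell :=
  ((cands.find? (fun c => !decide (c ∈ mlist ms bs))).getD (freshCell ms bs))

lemma pick_not_mem (cands ms bs) : pick cands ms bs ∉ markedCells ms bs := by
  rw [mem_markedCells]
  unfold pick
  rcases h : cands.find? (fun c => !decide (c ∈ mlist ms bs)) with _ | c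
  · simpa using freshCell_not_mem ms bs
  · have := List.find?_some h
    simp at this ⊢
    exact this

lemma pick_spec {cands ms bs} (h : ∃ c ∈ cands, c ∉ mlist ms bs) :
    pick cands ms bs ∈ cands ∧ pick cands ms bs ∉ mlist ms bs := by
  obtain ⟨c, hc, hfree⟩ := h
  have : (cands.find? (fun c => !decide (c ∈ mlist ms bs))).isSome := by
    rw [List.find?_isSome]
    exact ⟨c, hc, by simpa using hfree⟩
  rcases Option.isSome_iff_exists.1 this with ⟨a, ha⟩
  have h1 := List.find?_some ha
  have h2 := List.mem_of_find?_eq_some ha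
  simp at h1
  simp [pick, ha]
  exact ⟨h2, h1⟩

lemma pick_cons_of_free {c : Cell} {cands ms bs} (h : c ∉ mlist ms bs) :
    pick (c :: cands) ms bs = c := by
  simp [pick, List.find?_cons_of_pos, h]

lemma pick_cons_of_marked {c : Cell} {cands ms bs} (h : c ∈ mlist ms bs) :
    pick (c :: cands) ms bs = pick cands ms bs := by
  simp [pick, List.find?_cons_of_neg, h]

end S5
namespace S5

def rot (u : Cell) : Cell := (-u.2, u.1)
def pm (s : ℤ) (u : Cell) : Cell := (s * u.1, s * u.2)

def isUnit (u : Cell) : Prop := u = (1,0) ∨ u = (-1,0) ∨ u = (0,1) ∨ u = (0,-1)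

/-- affine orthogonal map -/
def aff (t u v : Cell) (q : Cell) : Cell :=
  (t.1 + q.1 * u.1 + q.2 * v.1, t.2 + q.1 * u.2 + q.2 * v.2)

lemma isSym_aff (t : Cell) {u v : Cell} (hu : isUnit u) (hv : v = rot u ∨ v = -rot u) :
    IsSym (aff t u v) := by
  rcases hu with h | h | h | h <;> rcases hv with h' | h' <;> subst h <;> subst h' <;>
    simp only [rot, aff, IsSym]
  · exact ⟨t, true, true, false, fun p => by simp [aff, rot, Prod.ext_iff] <;> omega⟩
  · exact ⟨t, true, false, false, fun p => by simp [aff, rot, Prod.ext_iff] <;> omega⟩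
  · exact ⟨t, false, false, false, fun p => by simp [aff, rot, Prod.ext_iff] <;> omega⟩
  · exact ⟨t, false, true, false, fun p => by simp [aff, rot, Prod.ext_iff] <;> omega⟩
  · exact ⟨t, false, true, true, fun p => by simp [aff, rot, Prod.ext_iff] <;> omega⟩
  · exact ⟨t, true, true, true, fun p => by simp [aff, rot, Prod.ext_iff] <;> omega⟩
  · exact ⟨t, true, false, true, fun p => by simp [aff, rot, Prod.ext_iff] <;> omega⟩
  · exact ⟨t, false, false, true, fun p => by simp [aff, rot, Prod.ext_iff] <;> omega⟩

lemma aff_inj {u v : Cell} (hu : isUnit u) (hv : v = rot u ∨ v = -rot u) (t : Cell) :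
    Function.Injective (aff t u v) := by
  rcases hu with h | h | h | h <;> rcases hv with h' | h' <;> subst h <;> subst h' <;>
  · intro ⟨a, b⟩ ⟨c, d⟩ hq
    simp [aff, rot, Prod.ext_iff] at hq ⊢
    omega

lemma ancestor_aff {Q M : Set Cell} {u v : Cell} (t : Cell)
    (hu : isUnit u) (hv : v = rot u ∨ v = -rot u)
    (h : ∀ q ∈ Q, aff t u v q ∈ M) : Ancestor Q M := by
  exact ⟨aff t u v '' Q, by rintro x ⟨q, hq, rfl⟩; exact h q hq,
    ⟨aff t u v, isSym_aff t hu hv, rfl⟩⟩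

lemma ortho_ops {u v : Cell} {s e : ℤ} (hu : isUnit u) (hv : v = rot u ∨ v = -rot u)
    (hs : s = 1 ∨ s = -1) (he : e = 1 ∨ e = -1) :
    isUnit (pm s u) ∧ (pm e v = rot (pm s u) ∨ pm e v = -rot (pm s u)) := by
  rcases hu with h | h | h | h <;> rcases hv with h' | h' <;>
    rcases hs with rfl | rfl <;> rcases he with rfl | rfl <;> subst h <;> subst h' <;>
    (simp [isUnit, pm, rot, Prod.ext_iff] <;> omega)

lemma ortho_swap {u v : Cell} (hu : isUnit u) (hv : v = rot u ∨ v = -rot u) :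
    isUnit v ∧ (u = rot v ∨ u = -rot v) := by
  rcases hu with h | h | h | h <;> rcases hv with h' | h' <;> subst h <;> subst h' <;>
    (simp [isUnit, rot, Prod.ext_iff] <;> omega)

end S5
namespace S5
set_option linter.unreachableTactic false
set_option linter.unusedTactic false

lemma nodup_length_le {l1 l2 : List Cell} (h : l1.Nodup) (hs : l1 ⊆ l2) :
    l1.length ≤ l2.length := by
  calc l1.length = l1.toFinset.card := (List.toFinset_card_of_nodup h).symm
    _ ≤ l2.toFinset.card := Finset.card_le_card (fun x hx => by
        simp only [List.mem_toFinset] at *; exact hs hx)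
    _ ≤ l2.length := l2.toFinset_card_le

lemma exists_free (threats others : List Cell) {L : List Cell}
    (hnd : (threats ++ others).Nodup)
    (ho : ∀ c ∈ others, c ∈ L) (hlen : L.length < threats.length + others.length) :
    ∃ c ∈ threats, c ∉ L := by
  by_contra hc
  push_neg at hc
  have hsub : (threats ++ others) ⊆ L := by
    intro c hcm
    rcases List.mem_append.1 hcm with h | h
    · exact hc c h
    · exact ho c h
  have := nodup_length_le hnd hsub
  simp at this
  omega

lemma play_len (σ : MStrategy) (τ : BStrategy) (n : ℕ) :
    (play σ τ n).1.length = n ∧ (play σ τ n).2.length = n := by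
  induction n with
  | zero => simp [play]
  | succ n ih => simp [play, ih.1, ih.2]

lemma mlist_mono {ms bs} (a : Cell) (b : Cell × Cell) {c : Cell} (h : c ∈ mlist ms bs) :
    c ∈ mlist (ms ++ [a]) (bs ++ [b]) := by
  simp only [mlist, List.flatMap_append, List.mem_append] at h ⊢
  simp only [List.flatMap_cons, List.flatMap_nil, List.mem_cons] at *
  tauto

end S5
namespace S5
set_option linter.unreachableTactic false
set_option linter.unusedTactic false
set_option maxHeartbeats 1000000

lemma map_flatMap' {α β γ : Type} (g : α → β) (f : γ → List α) (l : List γ) :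
    (l.flatMap f).map g = l.flatMap fun a => (f a).map g := by
  induction l <;> simp [*]

def baseA (m : ℕ) : List Cell :=
  (List.range m).flatMap fun (j : ℕ) => [Prod.mk (j:ℤ) (1:ℤ), Prod.mk (j:ℤ) (-1:ℤ)]
def base0 (m : ℕ) : List Cell := (List.range m).map fun (j : ℕ) => Prod.mk (j:ℤ) (0:ℤ)

lemma baseA_mem {m : ℕ} {c : Cell} :
    c ∈ baseA m ↔ ∃ j, j < m ∧ (c = ((j:ℤ),1) ∨ c = ((j:ℤ),-1)) := by
  simp [baseA, List.mem_flatMap, eq_comm]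

lemma base0_mem {m : ℕ} {c : Cell} :
    c ∈ base0 m ↔ ∃ j, j < m ∧ c = ((j:ℤ),0) := by
  simp [base0, eq_comm]

lemma baseA_nodup (m : ℕ) : (baseA m).Nodup := by
  induction m with
  | zero => simp [baseA]
  | succ m ih =>
      rw [baseA, List.range_succ, List.flatMap_append] at *
      rw [List.nodup_append]
      refine ⟨ih, by simp [Prod.ext_iff], ?_⟩
      intro c h1 d h2 hcd
      subst hcd
      rw [← baseA, baseA_mem] at h1
      obtain ⟨j, hj, hc⟩ := h1
      simp at h2
      rcases hc with rfl | rfl <;> rcases h2 with h | h <;>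
        simp [Prod.ext_iff] at h <;> omega

lemma base0_nodup (m : ℕ) : (base0 m).Nodup := by
  refine List.Nodup.map ?_ (List.nodup_range (n := m))
  intro a b h
  simp [Prod.ext_iff] at h
  exact_mod_cast h

lemma baseL_nodup (m : ℕ) : (baseA m ++ ((m:ℤ),(0:ℤ)) :: base0 m).Nodup := by
  rw [List.nodup_append]
  refine ⟨baseA_nodup m, ?_, ?_⟩
  · rw [List.nodup_cons]
    refine ⟨?_, base0_nodup m⟩
    rw [base0_mem]
    rintro ⟨j, hj, hc⟩
    simp [Prod.ext_iff] at hc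
    omega
  · intro c h1 d h2 hcd
    subst hcd
    rw [baseA_mem] at h1
    obtain ⟨j, hj, hc⟩ := h1
    simp only [List.mem_cons, base0_mem] at h2
    rcases h2 with h | ⟨k, hk, h⟩ <;> rcases hc with rfl | rfl <;>
      simp [Prod.ext_iff] at h

def run (t u : Cell) (m : ℕ) : List Cell := (base0 m).map (aff t u (rot u))

lemma run_mem {t u : Cell} {m : ℕ} {c : Cell} :
    c ∈ run t u m ↔ ∃ j, j < m ∧ c = aff t u (rot u) (Prod.mk (j:ℤ) 0) := by
  simp [run, base0, eq_comm]

lemma run_decomp (t u : Cell) (k : ℕ) :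
    ∃ rest : List Cell, run t u (k + 2) = t :: (t + u) :: rest ∧ rest.length = k := by
  refine ⟨((List.range k).map fun (j:ℕ) => Prod.mk ((j:ℤ)+2) (0:ℤ)).map (aff t u (rot u)),
    ?_, by simp⟩
  show run t u (k+1+1) = _
  rw [run, base0, List.range_succ_eq_map, List.range_succ_eq_map]
  simp only [List.map_cons, List.map_map]
  refine List.cons_eq_cons.2 ⟨by simp [aff, Prod.ext_iff], List.cons_eq_cons.2 ⟨?_, ?_⟩⟩
  · simp [aff, Prod.ext_iff, rot]
  · apply List.map_congr_left
    intro j hj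
    simp only [Function.comp, aff, Prod.ext_iff]
    constructor <;> push_cast <;> ring_nf

/-- the straight-line builder strategy -/
def strat2 : MStrategy := fun ms bs =>
  match ms with
  | [] => pick [(0,0)] ms bs
  | [m0] => pick [m0 + (1,0), m0 + (-1,0), m0 + (0,1), m0 + (0,-1)] ms bs
  | m0 :: m1 :: rest =>
      let u := m1 - m0
      let v := rot u
      let k := rest.length + 2
      pick (aff m0 u v (Prod.mk (k:ℤ) 0) :: (baseA k).map (aff m0 u v)) ms bs

lemma strat2_legal : MLegal strat2 := by
  intro ms bs
  match ms with
  | [] => exact pick_not_mem _ _ _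
  | [m0] => exact pick_not_mem _ _ _
  | m0 :: m1 :: rest => exact pick_not_mem _ _ _

end S5
namespace S5
set_option linter.unreachableTactic false
set_option linter.unusedTactic false
set_option maxHeartbeats 1000000

lemma strat2_play1 (τ : BStrategy) :
    (play strat2 τ 1).1 = [(0,0)] ∧ (play strat2 τ 1).2 = [τ [(0,0)] []] := by
  have h0 : play strat2 τ 0 = ([], []) := rfl
  have h : strat2 [] [] = (0,0) := by
    show pick [(0,0)] [] [] = (0,0)
    apply pick_cons_of_free
    simp [mlist]
  simp [play, h0, h]

lemma strat2_play2 (τ : BStrategy) :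
    ∃ t u, isUnit u ∧ (play strat2 τ 2).1 = run t u 2 := by
  obtain ⟨h1, h2⟩ := strat2_play1 τ
  have hms2 : (play strat2 τ 2).1
      = [((0,0):Cell)] ++ [strat2 [(0,0)] [τ [(0,0)] []]] := by
    show ((play strat2 τ 1).1 ++ [strat2 (play strat2 τ 1).1 (play strat2 τ 1).2]) = _
    rw [h1, h2]
  have hσ : strat2 [((0,0):Cell)] [τ [(0,0)] []]
      = pick [((0,0):Cell)+(1,0), (0,0)+(-1,0), (0,0)+(0,1), (0,0)+(0,-1)]
          [(0,0)] [τ [(0,0)] []] := rfl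
  have hex : ∃ x ∈ [((0,0):Cell)+(1,0), (0,0)+(-1,0), (0,0)+(0,1), (0,0)+(0,-1)],
      x ∉ mlist [((0,0):Cell)] [τ [(0,0)] []] := by
    apply exists_free _ [((0,0):Cell)] (by decide) ?_ ?_
    · intro x hx; simp at hx; subst hx; simp [mlist]
    · rw [mlist_length]; simp
  obtain ⟨hmem, hfree⟩ := pick_spec hex
  rw [← hσ] at hmem
  refine ⟨(0,0), strat2 [((0,0):Cell)] [τ [(0,0)] []] - (0,0), ?_, ?_⟩
  · simp only [List.mem_cons, List.not_mem_nil, or_false] at hmem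
    rcases hmem with h | h | h | h <;> rw [h] <;> unfold isUnit <;> decide
  · rw [hms2]
    simp only [run, List.range_succ, List.range_zero, List.map_append, List.map_nil,
      List.map_cons, List.nil_append, List.cons_append, List.singleton_append,
      Nat.cast_zero, Nat.cast_one]
    refine List.cons_eq_cons.2 ⟨?_, List.cons_eq_cons.2 ⟨?_, rfl⟩⟩
    · simp [aff, Prod.ext_iff]
    · simp [aff, Prod.ext_iff]

end S5
namespace S5
set_option linter.unreachableTactic false
set_option linter.unusedTactic false
set_option maxHeartbeats 1000000

lemma baseA_length (m : ℕ) : (baseA m).length = 2 * m := by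
  induction m with
  | zero => simp [baseA]
  | succ m ih =>
      rw [baseA, List.range_succ, List.flatMap_append] at *
      simp_all
      omega

lemma run_length (t u : Cell) (m : ℕ) : (run t u m).length = m := by
  simp [run, base0]

lemma mem_mlist_left {c : Cell} {ms bs} (h : c ∈ ms) : c ∈ mlist ms bs := by
  simp [mlist]
  exact Or.inl h

lemma strat2_cons (m0 m1 : Cell) (rest : List Cell) (bs) :
    strat2 (m0 :: m1 :: rest) bs =
      pick (aff m0 (m1-m0) (rot (m1-m0)) (Prod.mk ((rest.length + 2 : ℕ):ℤ) 0)
        :: (baseA (rest.length + 2)).map (aff m0 (m1-m0) (rot (m1-m0))))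
        (m0::m1::rest) bs := rfl

lemma run_succ (t u : Cell) (m : ℕ) :
    run t u (m+1) = run t u m ++ [aff t u (rot u) (Prod.mk (m:ℤ) 0)] := by
  simp [run, base0, List.range_succ]

lemma play_succ_fst (σ : MStrategy) (τ : BStrategy) (m : ℕ) :
    (play σ τ (m+1)).1 = (play σ τ m).1 ++ [σ (play σ τ m).1 (play σ τ m).2] := rfl

lemma strat2_step (τ : BStrategy) (t u : Cell) (hu : isUnit u) (m : ℕ) (hm : 2 ≤ m)
    (hrun : (play strat2 τ m).1 = run t u m) :
    (play strat2 τ (m+1)).1 = run t u (m+1) ∨ Ancestor L2 (makerSet strat2 τ (m+1)) := by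
  obtain ⟨k, rfl⟩ : ∃ k, m = k + 2 := ⟨m-2, by omega⟩
  set v := rot u with hv
  set bs := (play strat2 τ (k+2)).2 with hbs
  obtain ⟨rest, hdecomp, hrl⟩ := run_decomp t u k
  set fwd := aff t u v (Prod.mk ((k+2:ℕ):ℤ) 0) with hfwd
  have hσ : strat2 (run t u (k+2)) bs =
      pick (fwd :: (baseA (k+2)).map (aff t u v)) (run t u (k+2)) bs := by
    conv_lhs => rw [hdecomp]
    rw [strat2_cons, add_sub_cancel_left, hrl, ← hdecomp]
  have hms' : (play strat2 τ (k+2+1)).1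
      = run t u (k+2) ++ [strat2 (run t u (k+2)) bs] := by
    rw [play_succ_fst, hrun, hbs]
  by_cases hblock : fwd ∈ mlist (run t u (k+2)) bs
  · -- forward blocked: find a free perpendicular threat, win L2
    right
    rw [hσ, pick_cons_of_marked hblock] at hms'
    have hinj : Function.Injective (aff t u v) := aff_inj hu (Or.inl hv.symm) t
    have hex : ∃ x ∈ (baseA (k+2)).map (aff t u v), x ∉ mlist (run t u (k+2)) bs := by
      apply exists_free _ (fwd :: run t u (k+2)) ?_ ?_ ?_
      · have : ((baseA (k+2)).map (aff t u v) ++ fwd :: run t u (k+2))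
            = ((baseA (k+2)) ++ (Prod.mk ((k+2:ℕ):ℤ) (0:ℤ)) :: base0 (k+2)).map (aff t u v) := by
          simp [run, hfwd, hv]
        rw [this]
        exact (baseL_nodup (k+2)).map hinj
      · intro c hc
        rcases List.mem_cons.1 hc with rfl | hc
        · exact hblock
        · exact mem_mlist_left hc
      · rw [mlist_length]
        have h1 : (run t u (k+2)).length = k + 2 := run_length t u (k+2)
        have h2 : bs.length = k + 2 := by rw [hbs]; exact (play_len strat2 τ (k+2)).2
        simp [h1, h2, baseA_length, run_length]
        omega
    obtain ⟨hmem, hfree⟩ := pick_spec hex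
    obtain ⟨b, hb, hcb⟩ := List.mem_map.1 hmem
    rw [← hcb] at hms'
    obtain ⟨j, hj, hb'⟩ := baseA_mem.1 hb
    obtain ⟨j', hj', hs⟩ : ∃ j', j' < k + 2 ∧
        ((j:ℤ) = (j':ℤ) + 1 ∨ (j:ℤ) = (j':ℤ) - 1) := by
      rcases Nat.lt_or_ge (j+1) (k+2) with h | h
      · exact ⟨j+1, h, by omega⟩
      · refine ⟨j-1, by omega, by omega⟩
    have hmaker : ∀ x : Cell, x ∈ run t u (k+2) ++ [aff t u v b] → x ∈ makerSet strat2 τ (k+2+1) := by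
      intro x hx
      simp [makerSet, hms']
      simpa using hx
    have hrunmem : ∀ jj : ℕ, jj < k + 2 →
        aff t u v (Prod.mk (jj:ℤ) 0) ∈ run t u (k+2) ++ [aff t u v b] := by
      intro jj hjj
      exact List.mem_append_left _ (run_mem.2 ⟨jj, hjj, rfl⟩)
    have hcmem : aff t u v b ∈ run t u (k+2) ++ [aff t u v b] :=
      List.mem_append_right _ (by simp)
    rcases hb' with rfl | rfl <;> rcases hs with hs | hs
    · refine ancestor_aff (aff t u v (Prod.mk (j':ℤ) 0)) (u := pm 1 u) (v := pm 1 v)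
        (ortho_ops hu (Or.inl hv.symm) (Or.inl rfl) (Or.inl rfl)).1
        (ortho_ops hu (Or.inl hv.symm) (Or.inl rfl) (Or.inl rfl)).2 ?_
      intro q hq
      apply hmaker
      simp only [L2, Set.mem_insert_iff, Set.mem_singleton_iff] at hq
      rcases hq with rfl | rfl | rfl
      · have : aff (aff t u v (Prod.mk (j':ℤ) 0)) (pm 1 u) (pm 1 v) ((0:ℤ),(0:ℤ))
            = aff t u v (Prod.mk (j':ℤ) 0) := by simp [aff, pm]
        rw [this]; exact hrunmem j' hj'
      · have : aff (aff t u v (Prod.mk (j':ℤ) 0)) (pm 1 u) (pm 1 v) ((1:ℤ),(0:ℤ))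
            = aff t u v (Prod.mk (j:ℤ) 0) := by
          simp [aff, pm, Prod.ext_iff, hs]; constructor <;> ring
        rw [this]; exact hrunmem j hj
      · have : aff (aff t u v (Prod.mk (j':ℤ) 0)) (pm 1 u) (pm 1 v) ((1:ℤ),(1:ℤ))
            = aff t u v (Prod.mk (j:ℤ) 1) := by
          simp [aff, pm, Prod.ext_iff, hs]; constructor <;> ring
        rw [this]; exact hcmem
    · refine ancestor_aff (aff t u v (Prod.mk (j':ℤ) 0)) (u := pm (-1) u) (v := pm 1 v)
        (ortho_ops hu (Or.inl hv.symm) (Or.inr rfl) (Or.inl rfl)).1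
        (ortho_ops hu (Or.inl hv.symm) (Or.inr rfl) (Or.inl rfl)).2 ?_
      intro q hq
      apply hmaker
      simp only [L2, Set.mem_insert_iff, Set.mem_singleton_iff] at hq
      rcases hq with rfl | rfl | rfl
      · have : aff (aff t u v (Prod.mk (j':ℤ) 0)) (pm (-1) u) (pm 1 v) ((0:ℤ),(0:ℤ))
            = aff t u v (Prod.mk (j':ℤ) 0) := by simp [aff, pm]
        rw [this]; exact hrunmem j' hj'
      · have : aff (aff t u v (Prod.mk (j':ℤ) 0)) (pm (-1) u) (pm 1 v) ((1:ℤ),(0:ℤ))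
            = aff t u v (Prod.mk (j:ℤ) 0) := by
          simp [aff, pm, Prod.ext_iff, hs]; constructor <;> ring
        rw [this]; exact hrunmem j hj
      · have : aff (aff t u v (Prod.mk (j':ℤ) 0)) (pm (-1) u) (pm 1 v) ((1:ℤ),(1:ℤ))
            = aff t u v (Prod.mk (j:ℤ) 1) := by
          simp [aff, pm, Prod.ext_iff, hs]; constructor <;> ring
        rw [this]; exact hcmem
    · refine ancestor_aff (aff t u v (Prod.mk (j':ℤ) 0)) (u := pm 1 u) (v := pm (-1) v)
        (ortho_ops hu (Or.inl hv.symm) (Or.inl rfl) (Or.inr rfl)).1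
        (ortho_ops hu (Or.inl hv.symm) (Or.inl rfl) (Or.inr rfl)).2 ?_
      intro q hq
      apply hmaker
      simp only [L2, Set.mem_insert_iff, Set.mem_singleton_iff] at hq
      rcases hq with rfl | rfl | rfl
      · have : aff (aff t u v (Prod.mk (j':ℤ) 0)) (pm 1 u) (pm (-1) v) ((0:ℤ),(0:ℤ))
            = aff t u v (Prod.mk (j':ℤ) 0) := by simp [aff, pm]
        rw [this]; exact hrunmem j' hj'
      · have : aff (aff t u v (Prod.mk (j':ℤ) 0)) (pm 1 u) (pm (-1) v) ((1:ℤ),(0:ℤ))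
            = aff t u v (Prod.mk (j:ℤ) 0) := by
          simp [aff, pm, Prod.ext_iff, hs]; constructor <;> ring
        rw [this]; exact hrunmem j hj
      · have : aff (aff t u v (Prod.mk (j':ℤ) 0)) (pm 1 u) (pm (-1) v) ((1:ℤ),(1:ℤ))
            = aff t u v (Prod.mk (j:ℤ) (-1)) := by
          simp [aff, pm, Prod.ext_iff, hs]; constructor <;> ring
        rw [this]; exact hcmem
    · refine ancestor_aff (aff t u v (Prod.mk (j':ℤ) 0)) (u := pm (-1) u) (v := pm (-1) v)
        (ortho_ops hu (Or.inl hv.symm) (Or.inr rfl) (Or.inr rfl)).1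
        (ortho_ops hu (Or.inl hv.symm) (Or.inr rfl) (Or.inr rfl)).2 ?_
      intro q hq
      apply hmaker
      simp only [L2, Set.mem_insert_iff, Set.mem_singleton_iff] at hq
      rcases hq with rfl | rfl | rfl
      · have : aff (aff t u v (Prod.mk (j':ℤ) 0)) (pm (-1) u) (pm (-1) v) ((0:ℤ),(0:ℤ))
            = aff t u v (Prod.mk (j':ℤ) 0) := by simp [aff, pm]
        rw [this]; exact hrunmem j' hj'
      · have : aff (aff t u v (Prod.mk (j':ℤ) 0)) (pm (-1) u) (pm (-1) v) ((1:ℤ),(0:ℤ))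
            = aff t u v (Prod.mk (j:ℤ) 0) := by
          simp [aff, pm, Prod.ext_iff, hs]; constructor <;> ring
        rw [this]; exact hrunmem j hj
      · have : aff (aff t u v (Prod.mk (j':ℤ) 0)) (pm (-1) u) (pm (-1) v) ((1:ℤ),(1:ℤ))
            = aff t u v (Prod.mk (j:ℤ) (-1)) := by
          simp [aff, pm, Prod.ext_iff, hs]; constructor <;> ring
        rw [this]; exact hcmem
  · -- forward free: extend the run
    left
    rw [hσ, pick_cons_of_free hblock] at hms'
    rw [hms', run_succ t u (k+2)]

lemma strat2_run_or_win (τ : BStrategy) (m : ℕ) (hm : 2 ≤ m) :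
    (∃ t u, isUnit u ∧ (play strat2 τ m).1 = run t u m) ∨
    (∃ kk, Ancestor L2 (makerSet strat2 τ kk)) := by
  induction m with
  | zero => omega
  | succ m ih =>
      rcases Nat.lt_or_ge m 2 with h | h
      · have h2 : m + 1 = 2 := by omega
        rw [h2]
        exact Or.inl (strat2_play2 τ)
      · rcases ih h with ⟨t, u, hu, hr⟩ | hwin
        · rcases strat2_step τ t u hu m h hr with h' | h'
          · exact Or.inl ⟨t, u, hu, h'⟩
          · exact Or.inr ⟨m+1, h'⟩
        · exact Or.inr hwin

lemma ancestor_Srow (n : ℕ) (τ : BStrategy) (t u : Cell) (hu : isUnit u)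
    (hr : (play strat2 τ n).1 = run t u n) : Ancestor (Srow n) (makerSet strat2 τ n) := by
  apply ancestor_aff t hu (Or.inl rfl)
  intro q hq
  obtain ⟨h1, h2, h3⟩ := hq
  have : q = Prod.mk ((q.1.toNat : ℕ):ℤ) (0:ℤ) := by
    rw [Prod.ext_iff]
    constructor
    · simp [Int.toNat_of_nonneg h1]
    · exact h3
  simp only [makerSet, Set.mem_setOf_eq, hr]
  rw [this]
  exact run_mem.2 ⟨q.1.toNat, by omega, rfl⟩

theorem part1 : GameWinner {Srow 2} := by
  refine ⟨strat2, strat2_legal, fun τ _ => ?_⟩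
  obtain ⟨t, u, hu, hr⟩ := strat2_play2 τ
  exact ⟨2, Srow 2, rfl, ancestor_Srow 2 τ t u hu hr⟩

theorem part2 (n : ℕ) (hn : 3 ≤ n) : GameWinner {Srow n, L2} := by
  refine ⟨strat2, strat2_legal, fun τ _ => ?_⟩
  rcases strat2_run_or_win τ n (by omega) with ⟨t, u, hu, hr⟩ | ⟨k, hw⟩
  · exact ⟨n, Srow n, Or.inl rfl, ancestor_Srow n τ t u hu hr⟩
  · exact ⟨k, L2, Or.inr rfl, hw⟩

end S5
namespace S5
set_option linter.unreachableTactic false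
set_option linter.unusedTactic false
set_option maxHeartbeats 1000000

def norm3 (m0 m1 m2 : Cell) : Cell × Cell × Cell :=
  let u := m1 - m0
  let p := rot u
  if m2 = m0 + p then (m0, u, p)
  else if m2 = m1 + p then (m1, -u, p)
  else if m2 = m0 - p then (m0, u, -p)
  else (m1, -u, -p)

def strat3 : MStrategy := fun ms bs =>
  match ms with
  | [] => pick [(0,0)] ms bs
  | [m0] => pick [m0 + (1,0), m0 + (-1,0), m0 + (0,1), m0 + (0,-1)] ms bs
  | [m0, m1] =>
      let u := m1 - m0
      let p := rot u
      pick [m1 + u, m0 - u, m0 + p, m1 + p, m0 - p, m1 - p] ms bs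
  | m0 :: m1 :: m2 :: _ =>
      let w := norm3 m0 m1 m2
      pick [aff w.1 w.2.1 w.2.2 ((1:ℤ),(1:ℤ)), aff w.1 w.2.1 w.2.2 ((0:ℤ),(-1:ℤ)),
            aff w.1 w.2.1 w.2.2 ((1:ℤ),(-1:ℤ)), aff w.1 w.2.1 w.2.2 ((0:ℤ),(2:ℤ)),
            aff w.1 w.2.1 w.2.2 ((-1:ℤ),(1:ℤ))] ms bs

lemma strat3_legal : MLegal strat3 := by
  intro ms bs
  match ms with
  | [] => exact pick_not_mem _ _ _
  | [m0] => exact pick_not_mem _ _ _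
  | [m0, m1] => exact pick_not_mem _ _ _
  | m0 :: m1 :: m2 :: rest => exact pick_not_mem _ _ _

lemma strat3_two (m0 m1 : Cell) (bs) :
    strat3 [m0, m1] bs = pick [m1 + (m1-m0), m0 - (m1-m0), m0 + rot (m1-m0),
      m1 + rot (m1-m0), m0 - rot (m1-m0), m1 - rot (m1-m0)] [m0, m1] bs := rfl

lemma strat3_three (m0 m1 m2 : Cell) (rest : List Cell) (bs) :
    strat3 (m0 :: m1 :: m2 :: rest) bs =
      pick [aff (norm3 m0 m1 m2).1 (norm3 m0 m1 m2).2.1 (norm3 m0 m1 m2).2.2 ((1:ℤ),(1:ℤ)),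
            aff (norm3 m0 m1 m2).1 (norm3 m0 m1 m2).2.1 (norm3 m0 m1 m2).2.2 ((0:ℤ),(-1:ℤ)),
            aff (norm3 m0 m1 m2).1 (norm3 m0 m1 m2).2.1 (norm3 m0 m1 m2).2.2 ((1:ℤ),(-1:ℤ)),
            aff (norm3 m0 m1 m2).1 (norm3 m0 m1 m2).2.1 (norm3 m0 m1 m2).2.2 ((0:ℤ),(2:ℤ)),
            aff (norm3 m0 m1 m2).1 (norm3 m0 m1 m2).2.1 (norm3 m0 m1 m2).2.2 ((-1:ℤ),(1:ℤ))]
        (m0 :: m1 :: m2 :: rest) bs := rfl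

lemma strat3_play1 (τ : BStrategy) :
    (play strat3 τ 1).1 = [(0,0)] ∧ (play strat3 τ 1).2 = [τ [(0,0)] []] := by
  have h0 : play strat3 τ 0 = ([], []) := rfl
  have h : strat3 [] [] = (0,0) := by
    show pick [(0,0)] [] [] = (0,0)
    apply pick_cons_of_free
    simp [mlist]
  simp [play, h0, h]

lemma strat3_play2 (τ : BStrategy) :
    ∃ t u, isUnit u ∧ (play strat3 τ 2).1 = [t, t + u] := by
  obtain ⟨h1, h2⟩ := strat3_play1 τ
  have hms2 : (play strat3 τ 2).1
      = [((0,0):Cell)] ++ [strat3 [(0,0)] [τ [(0,0)] []]] := by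
    show ((play strat3 τ 1).1 ++ [strat3 (play strat3 τ 1).1 (play strat3 τ 1).2]) = _
    rw [h1, h2]
  have hσ : strat3 [((0,0):Cell)] [τ [(0,0)] []]
      = pick [((0,0):Cell)+(1,0), (0,0)+(-1,0), (0,0)+(0,1), (0,0)+(0,-1)]
          [(0,0)] [τ [(0,0)] []] := rfl
  have hex : ∃ x ∈ [((0,0):Cell)+(1,0), (0,0)+(-1,0), (0,0)+(0,1), (0,0)+(0,-1)],
      x ∉ mlist [((0,0):Cell)] [τ [(0,0)] []] := by
    apply exists_free _ [((0,0):Cell)] (by decide) ?_ ?_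
    · intro x hx; simp at hx; subst hx; simp [mlist]
    · rw [mlist_length]; simp
  obtain ⟨hmem, hfree⟩ := pick_spec hex
  rw [← hσ] at hmem
  refine ⟨(0,0), strat3 [((0,0):Cell)] [τ [(0,0)] []] - (0,0), ?_, ?_⟩
  · simp only [List.mem_cons, List.not_mem_nil, or_false] at hmem
    rcases hmem with h | h | h | h <;> rw [h] <;> unfold isUnit <;> decide
  · rw [hms2]
    refine List.cons_eq_cons.2 ⟨rfl, List.cons_eq_cons.2 ⟨?_, rfl⟩⟩
    simp

lemma isUnit_neg {u : Cell} (hu : isUnit u) : isUnit (-u) := by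
  rcases hu with rfl | rfl | rfl | rfl <;> unfold isUnit <;> decide

lemma rot_neg (u : Cell) : rot (-u) = -rot u := by
  simp [rot, Prod.ext_iff]

end S5
namespace S5
set_option linter.unreachableTactic false
set_option linter.unusedTactic false
set_option maxHeartbeats 1000000

lemma mlist_play_mono (σ : MStrategy) (τ : BStrategy) (m : ℕ) {c : Cell}
    (h : c ∈ mlist (play σ τ m).1 (play σ τ m).2) :
    c ∈ mlist (play σ τ (m+1)).1 (play σ τ (m+1)).2 :=
  mlist_mono _ _ h

lemma norm3_eval {u : Cell} (hu : isUnit u) (t : Cell) :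
    norm3 t (t+u) (t + rot u) = (t, u, rot u) ∧
    norm3 t (t+u) (t+u + rot u) = (t+u, -u, rot u) ∧
    norm3 t (t+u) (t - rot u) = (t, u, -rot u) ∧
    norm3 t (t+u) (t+u - rot u) = (t+u, -u, -rot u) := by
  rcases hu with rfl | rfl | rfl | rfl <;>
    refine ⟨?_, ?_, ?_, ?_⟩ <;>
    · unfold norm3
      simp only [add_sub_cancel_left]
      split_ifs with h1 h2 h3 <;>
        simp_all [rot, Prod.ext_iff] <;> omega

lemma round3 (τ : BStrategy) :
    (∃ Q ∈ ({Srow 3, C2, Z2} : Set (Set Cell)), Ancestor Q (makerSet strat3 τ 3)) ∨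
    ∃ ms0 ms1 ms2 t u v, (play strat3 τ 3).1 = [ms0, ms1, ms2] ∧
      norm3 ms0 ms1 ms2 = (t, u, v) ∧ isUnit u ∧ (v = rot u ∨ v = -rot u) ∧
      ((ms0 = aff t u v ((0:ℤ),(0:ℤ)) ∧ ms1 = aff t u v ((1:ℤ),(0:ℤ))) ∨
       (ms0 = aff t u v ((1:ℤ),(0:ℤ)) ∧ ms1 = aff t u v ((0:ℤ),(0:ℤ)))) ∧
      ms2 = aff t u v ((0:ℤ),(1:ℤ)) ∧
      aff t u v ((2:ℤ),(0:ℤ)) ∈ mlist (play strat3 τ 3).1 (play strat3 τ 3).2 ∧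
      aff t u v ((-1:ℤ),(0:ℤ)) ∈ mlist (play strat3 τ 3).1 (play strat3 τ 3).2 := by
  obtain ⟨t0, u0, hu0, h2⟩ := strat3_play2 τ
  set bs2 := (play strat3 τ 2).2 with hbs2
  have hms3 : (play strat3 τ 3).1 = [t0, t0+u0] ++ [strat3 [t0, t0+u0] bs2] := by
    rw [play_succ_fst, h2]
  have hred : strat3 [t0, t0+u0] bs2 =
      pick [t0+u0+u0, t0-u0, t0 + rot u0, t0+u0 + rot u0, t0 - rot u0, t0+u0 - rot u0]
        [t0, t0+u0] bs2 := by
    rw [strat3_two]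
    simp only [add_sub_cancel_left]
  -- cell in the play-2 marked list is in the play-3 marked list
  have hmono : ∀ c : Cell, c ∈ mlist [t0, t0+u0] bs2 →
      c ∈ mlist (play strat3 τ 3).1 (play strat3 τ 3).2 := by
    intro c hc
    apply mlist_play_mono
    rw [← h2] at hc
    exact hc
  -- winning helper: if the third move makes three cells in a row
  have hwin3 : ∀ base : Cell, (∀ x : ℤ, 0 ≤ x → x < 3 →
        aff base u0 (rot u0) (x, (0:ℤ)) ∈ makerSet strat3 τ 3) →
      ∃ Q ∈ ({Srow 3, C2, Z2} : Set (Set Cell)), Ancestor Q (makerSet strat3 τ 3) := by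
    intro base hmem
    refine ⟨Srow 3, Set.mem_insert _ _, ancestor_aff base hu0 (Or.inl rfl) ?_⟩
    rintro ⟨x, y⟩ ⟨hx1, hx2, hy⟩
    subst hy
    exact hmem x hx1 (by exact_mod_cast hx2)
  by_cases hc1 : t0+u0+u0 ∈ mlist [t0, t0+u0] bs2
  · rw [hred, pick_cons_of_marked hc1] at hms3
    by_cases hc2 : t0-u0 ∈ mlist [t0, t0+u0] bs2
    · -- both straight extensions blocked
      rw [pick_cons_of_marked hc2] at hms3
      have hlist : ([t0 + rot u0, t0+u0 + rot u0, t0 - rot u0, t0+u0 - rot u0] ++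
            [t0+u0+u0, t0-u0, t0, t0+u0])
          = ([((0:ℤ),(1:ℤ)), ((1:ℤ),(1:ℤ)), ((0:ℤ),(-1:ℤ)), ((1:ℤ),(-1:ℤ)),
              ((2:ℤ),(0:ℤ)), ((-1:ℤ),(0:ℤ)), ((0:ℤ),(0:ℤ)), ((1:ℤ),(0:ℤ))] : List Cell).map
            (aff t0 u0 (rot u0)) := by
        simp [aff, rot, Prod.ext_iff] <;> (and_intros <;> ring)
      have hex : ∃ x ∈ [t0 + rot u0, t0+u0 + rot u0, t0 - rot u0, t0+u0 - rot u0],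
          x ∉ mlist [t0, t0+u0] bs2 := by
        apply exists_free _ [t0+u0+u0, t0-u0, t0, t0+u0] ?_ ?_ ?_
        · rw [hlist]
          exact List.Nodup.map (aff_inj hu0 (Or.inl rfl) t0) (by decide)
        · intro c hc
          simp only [List.mem_cons, List.not_mem_nil, or_false] at hc
          rcases hc with rfl | rfl | rfl | rfl
          · exact hc1
          · exact hc2
          · exact mem_mlist_left (by simp)
          · exact mem_mlist_left (by simp)
        · rw [mlist_length]
          have : bs2.length = 2 := by rw [hbs2]; exact (play_len strat3 τ 2).2
          simp [this]
      obtain ⟨hmem, hfree⟩ := pick_spec hex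
      right
      simp only [List.mem_cons, List.not_mem_nil, or_false] at hmem
      set cv := pick [t0 + rot u0, t0+u0 + rot u0, t0 - rot u0, t0+u0 - rot u0]
        [t0, t0+u0] bs2 with hcv
      have hext1 : t0+u0+u0 ∈ mlist (play strat3 τ 3).1 (play strat3 τ 3).2 :=
        hmono _ hc1
      have hext2 : t0-u0 ∈ mlist (play strat3 τ 3).1 (play strat3 τ 3).2 :=
        hmono _ hc2
      rcases hmem with hcm | hcm | hcm | hcm
      · -- cv = t0 + rot u0 : normalized (t0, u0, rot u0)
        refine ⟨t0, t0+u0, cv, t0, u0, rot u0, by simp [hms3, hcm], ?_, hu0, Or.inl rfl,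
          Or.inl ⟨by simp [aff], by simp [aff, Prod.ext_iff] <;> (and_intros <;> ring)⟩,
          by rw [hcm]; simp [aff, Prod.ext_iff] <;> (and_intros <;> ring), ?_, ?_⟩
        · rw [hcm]; exact (norm3_eval hu0 t0).1
        · have : aff t0 u0 (rot u0) ((2:ℤ),(0:ℤ)) = t0+u0+u0 := by
            simp [aff, Prod.ext_iff] <;> (and_intros <;> ring)
          rw [this]; exact hext1
        · have : aff t0 u0 (rot u0) ((-1:ℤ),(0:ℤ)) = t0-u0 := by
            simp [aff, Prod.ext_iff] <;> (and_intros <;> ring)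
          rw [this]; exact hext2
      · -- cv = t0+u0 + rot u0 : normalized (t0+u0, -u0, rot u0)
        refine ⟨t0, t0+u0, cv, t0+u0, -u0, rot u0, by simp [hms3, hcm], ?_,
          isUnit_neg hu0, Or.inr (by rw [rot_neg, neg_neg]),
          Or.inr ⟨by simp [aff, Prod.ext_iff] <;> (and_intros <;> ring),
                  by simp [aff, Prod.ext_iff] <;> (and_intros <;> ring)⟩,
          by rw [hcm]; simp [aff, Prod.ext_iff] <;> (and_intros <;> ring), ?_, ?_⟩
        · rw [hcm]; exact (norm3_eval hu0 t0).2.1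
        · have : aff (t0+u0) (-u0) (rot u0) ((2:ℤ),(0:ℤ)) = t0-u0 := by
            simp [aff, Prod.ext_iff] <;> (and_intros <;> ring)
          rw [this]; exact hext2
        · have : aff (t0+u0) (-u0) (rot u0) ((-1:ℤ),(0:ℤ)) = t0+u0+u0 := by
            simp [aff, Prod.ext_iff] <;> (and_intros <;> ring)
          rw [this]; exact hext1
      · -- cv = t0 - rot u0 : normalized (t0, u0, -rot u0)
        refine ⟨t0, t0+u0, cv, t0, u0, -rot u0, by simp [hms3, hcm], ?_, hu0, Or.inr rfl,
          Or.inl ⟨by simp [aff], by simp [aff, Prod.ext_iff] <;> (and_intros <;> ring)⟩,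
          by rw [hcm]; simp [aff, Prod.ext_iff] <;> (and_intros <;> ring), ?_, ?_⟩
        · rw [hcm]; exact (norm3_eval hu0 t0).2.2.1
        · have : aff t0 u0 (-rot u0) ((2:ℤ),(0:ℤ)) = t0+u0+u0 := by
            simp [aff, Prod.ext_iff] <;> (and_intros <;> ring)
          rw [this]; exact hext1
        · have : aff t0 u0 (-rot u0) ((-1:ℤ),(0:ℤ)) = t0-u0 := by
            simp [aff, Prod.ext_iff] <;> (and_intros <;> ring)
          rw [this]; exact hext2
      · -- cv = t0+u0 - rot u0 : normalized (t0+u0, -u0, -rot u0)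
        refine ⟨t0, t0+u0, cv, t0+u0, -u0, -rot u0, by simp [hms3, hcm], ?_,
          isUnit_neg hu0, Or.inl (by rw [rot_neg]),
          Or.inr ⟨by simp [aff, Prod.ext_iff] <;> (and_intros <;> ring),
                  by simp [aff, Prod.ext_iff] <;> (and_intros <;> ring)⟩,
          by rw [hcm]; simp [aff, Prod.ext_iff] <;> (and_intros <;> ring), ?_, ?_⟩
        · rw [hcm]; exact (norm3_eval hu0 t0).2.2.2
        · have : aff (t0+u0) (-u0) (-rot u0) ((2:ℤ),(0:ℤ)) = t0-u0 := by
            simp [aff, Prod.ext_iff] <;> (and_intros <;> ring)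
          rw [this]; exact hext2
        · have : aff (t0+u0) (-u0) (-rot u0) ((-1:ℤ),(0:ℤ)) = t0+u0+u0 := by
            simp [aff, Prod.ext_iff] <;> (and_intros <;> ring)
          rw [this]; exact hext1
    · -- t0 - u0 is free : take it, win S3
      left
      rw [pick_cons_of_free hc2] at hms3
      apply hwin3 (t0-u0)
      intro x hx1 hx2
      simp only [makerSet, Set.mem_setOf_eq, hms3]
      have : x = 0 ∨ x = 1 ∨ x = 2 := by omega
      rcases this with rfl | rfl | rfl <;> simp [aff, Prod.ext_iff] <;> omega
  · -- t0+u0+u0 is free : take it, win S3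
    left
    rw [hred, pick_cons_of_free hc1] at hms3
    apply hwin3 t0
    intro x hx1 hx2
    simp only [makerSet, Set.mem_setOf_eq, hms3]
    have : x = 0 ∨ x = 1 ∨ x = 2 := by omega
    rcases this with rfl | rfl | rfl <;> simp [aff, Prod.ext_iff] <;> omega

end S5
namespace S5
set_option linter.unreachableTactic false
set_option linter.unusedTactic false
set_option maxHeartbeats 1000000

theorem part3 : GameWinner {Srow 3, C2, Z2} := by
  refine ⟨strat3, strat3_legal, fun τ _ => ?_⟩
  rcases round3 τ with ⟨Q, hQ, hA⟩ | ⟨ms0, ms1, ms2, t, u, v, hms3, hn, hu, hv, hm01, hm2,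
    hext1, hext2⟩
  · exact ⟨3, Q, hQ, hA⟩
  set bs3 := (play strat3 τ 3).2 with hbs3
  have hms4 : (play strat3 τ 4).1 = [ms0, ms1, ms2] ++ [strat3 [ms0, ms1, ms2] bs3] := by
    rw [play_succ_fst, hms3]
  have hred : strat3 [ms0, ms1, ms2] bs3 =
      pick [aff t u v ((1:ℤ),(1:ℤ)), aff t u v ((0:ℤ),(-1:ℤ)), aff t u v ((1:ℤ),(-1:ℤ)),
            aff t u v ((0:ℤ),(2:ℤ)), aff t u v ((-1:ℤ),(1:ℤ))] [ms0, ms1, ms2] bs3 := by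
    rw [strat3_three, hn]
  rw [hms3] at hext1 hext2
  have hex : ∃ x ∈ [aff t u v ((1:ℤ),(1:ℤ)), aff t u v ((0:ℤ),(-1:ℤ)),
      aff t u v ((1:ℤ),(-1:ℤ)), aff t u v ((0:ℤ),(2:ℤ)), aff t u v ((-1:ℤ),(1:ℤ))],
      x ∉ mlist [ms0, ms1, ms2] bs3 := by
    apply exists_free _ [aff t u v ((0:ℤ),(0:ℤ)), aff t u v ((1:ℤ),(0:ℤ)),
      aff t u v ((0:ℤ),(1:ℤ)), aff t u v ((2:ℤ),(0:ℤ)), aff t u v ((-1:ℤ),(0:ℤ))] ?_ ?_ ?_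
    · have : ([aff t u v ((1:ℤ),(1:ℤ)), aff t u v ((0:ℤ),(-1:ℤ)), aff t u v ((1:ℤ),(-1:ℤ)),
          aff t u v ((0:ℤ),(2:ℤ)), aff t u v ((-1:ℤ),(1:ℤ))] ++
          [aff t u v ((0:ℤ),(0:ℤ)), aff t u v ((1:ℤ),(0:ℤ)), aff t u v ((0:ℤ),(1:ℤ)),
          aff t u v ((2:ℤ),(0:ℤ)), aff t u v ((-1:ℤ),(0:ℤ))])
          = ([((1:ℤ),(1:ℤ)), ((0:ℤ),(-1:ℤ)), ((1:ℤ),(-1:ℤ)), ((0:ℤ),(2:ℤ)), ((-1:ℤ),(1:ℤ)),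
              ((0:ℤ),(0:ℤ)), ((1:ℤ),(0:ℤ)), ((0:ℤ),(1:ℤ)), ((2:ℤ),(0:ℤ)),
              ((-1:ℤ),(0:ℤ))] : List Cell).map (aff t u v) := by simp
      rw [this]
      exact List.Nodup.map (aff_inj hu hv t) (by decide)
    · intro c hc
      simp only [List.mem_cons, List.not_mem_nil, or_false] at hc
      rcases hc with rfl | rfl | rfl | rfl | rfl
      · rcases hm01 with ⟨h0, h1⟩ | ⟨h0, h1⟩
        · exact mem_mlist_left (by rw [← h0]; simp)
        · exact mem_mlist_left (by rw [← h1]; simp)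
      · rcases hm01 with ⟨h0, h1⟩ | ⟨h0, h1⟩
        · exact mem_mlist_left (by rw [← h1]; simp)
        · exact mem_mlist_left (by rw [← h0]; simp)
      · exact mem_mlist_left (by rw [← hm2]; simp)
      · exact hext1
      · exact hext2
    · rw [mlist_length]
      have : bs3.length = 3 := by rw [hbs3]; exact (play_len strat3 τ 3).2
      simp [this]
  obtain ⟨hmem, hfree⟩ := pick_spec hex
  rw [← hred] at hmem
  rw [← hred]  at hfree
  set cv := strat3 [ms0, ms1, ms2] bs3 with hcv
  have hmk : ∀ x : Cell, (x = aff t u v ((0:ℤ),(0:ℤ)) ∨ x = aff t u v ((1:ℤ),(0:ℤ)) ∨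
      x = aff t u v ((0:ℤ),(1:ℤ)) ∨ x = cv) → x ∈ makerSet strat3 τ 4 := by
    intro x hx
    simp only [makerSet, Set.mem_setOf_eq, hms4]
    rcases hm01 with ⟨h0, h1⟩ | ⟨h0, h1⟩ <;>
      rcases hx with rfl | rfl | rfl | rfl <;>
      simp [h0, h1, hm2] <;> tauto
  simp only [List.mem_cons, List.not_mem_nil, or_false] at hmem
  have hswap := ortho_swap hu hv
  rcases hmem with hcm | hcm | hcm | hcm | hcm
  · -- C2
    refine ⟨4, C2, by simp, ancestor_aff t hu hv ?_⟩
    intro q hq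
    simp only [C2, Set.mem_insert_iff, Set.mem_singleton_iff] at hq
    rcases hq with rfl | rfl | rfl | rfl
    · exact hmk _ (Or.inl rfl)
    · exact hmk _ (Or.inr (Or.inl rfl))
    · exact hmk _ (Or.inr (Or.inr (Or.inl rfl)))
    · exact hmk _ (Or.inr (Or.inr (Or.inr hcm.symm)))
  · -- vertical S3 downward
    refine ⟨4, Srow 3, by simp, ancestor_aff (aff t u v ((0:ℤ),(-1:ℤ))) (u := v) (v := u)
      hswap.1 hswap.2 ?_⟩
    rintro ⟨x, y⟩ ⟨hx1, hx2, hy⟩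
    subst hy
    have : x = 0 ∨ x = 1 ∨ x = 2 := by omega
    rcases this with rfl | rfl | rfl
    · refine hmk _ (Or.inr (Or.inr (Or.inr ?_)))
      rw [hcm]
      simp [aff, Prod.ext_iff]
    · refine hmk _ (Or.inl ?_)
      simp [aff, Prod.ext_iff] <;> (and_intros <;> ring)
    · refine hmk _ (Or.inr (Or.inr (Or.inl ?_)))
      simp [aff, Prod.ext_iff] <;> (and_intros <;> ring)
  · -- Z2 with cell (1,-1)
    refine ⟨4, Z2, by simp, ancestor_aff (aff t u v ((0:ℤ),(1:ℤ)))
      (u := pm (-1) v) (v := pm 1 u)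
      (ortho_ops hswap.1 hswap.2 (Or.inr rfl) (Or.inl rfl)).1
      (ortho_ops hswap.1 hswap.2 (Or.inr rfl) (Or.inl rfl)).2 ?_⟩
    intro q hq
    simp only [Z2, Set.mem_insert_iff, Set.mem_singleton_iff] at hq
    rcases hq with rfl | rfl | rfl | rfl
    · refine hmk _ (Or.inr (Or.inr (Or.inl ?_)))
      simp [aff, pm, Prod.ext_iff] <;> (and_intros <;> ring)
    · refine hmk _ (Or.inl ?_)
      simp [aff, pm, Prod.ext_iff] <;> (and_intros <;> ring)
    · refine hmk _ (Or.inr (Or.inl ?_))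
      simp [aff, pm, Prod.ext_iff] <;> (and_intros <;> ring)
    · refine hmk _ (Or.inr (Or.inr (Or.inr ?_)))
      rw [hcm]
      simp [aff, pm, Prod.ext_iff] <;> (and_intros <;> ring)
  · -- vertical S3 upward
    refine ⟨4, Srow 3, by simp, ancestor_aff (aff t u v ((0:ℤ),(0:ℤ))) (u := v) (v := u)
      hswap.1 hswap.2 ?_⟩
    rintro ⟨x, y⟩ ⟨hx1, hx2, hy⟩
    subst hy
    have : x = 0 ∨ x = 1 ∨ x = 2 := by omega
    rcases this with rfl | rfl | rfl
    · refine hmk _ (Or.inl ?_)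
      simp [aff, Prod.ext_iff] <;> (and_intros <;> ring)
    · refine hmk _ (Or.inr (Or.inr (Or.inl ?_)))
      simp [aff, Prod.ext_iff] <;> (and_intros <;> ring)
    · refine hmk _ (Or.inr (Or.inr (Or.inr ?_)))
      rw [hcm]
      simp [aff, Prod.ext_iff] <;> (and_intros <;> ring)
  · -- Z2 with cell (-1,1)
    refine ⟨4, Z2, by simp, ancestor_aff (aff t u v ((-1:ℤ),(1:ℤ)))
      (u := pm 1 u) (v := pm (-1) v)
      (ortho_ops hu hv (Or.inl rfl) (Or.inr rfl)).1
      (ortho_ops hu hv (Or.inl rfl) (Or.inr rfl)).2 ?_⟩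
    intro q hq
    simp only [Z2, Set.mem_insert_iff, Set.mem_singleton_iff] at hq
    rcases hq with rfl | rfl | rfl | rfl
    · refine hmk _ (Or.inr (Or.inr (Or.inr ?_)))
      rw [hcm]
      simp [aff, pm, Prod.ext_iff] <;> (and_intros <;> ring)
    · refine hmk _ (Or.inr (Or.inr (Or.inl ?_)))
      simp [aff, pm, Prod.ext_iff] <;> (and_intros <;> ring)
    · refine hmk _ (Or.inl ?_)
      simp [aff, pm, Prod.ext_iff] <;> (and_intros <;> ring)
    · refine hmk _ (Or.inr (Or.inl ?_))
      simp [aff, pm, Prod.ext_iff] <;> (and_intros <;> ring)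

end S5

/-- the teams `{S_2}`, `{S_n, L_2}` for every `n ≥ 3`, and
`{S_3, C_2, Z_2}` are all winners. -/
theorem stmt5 :
    GameWinner {Srow 2} ∧ (∀ n : ℕ, 3 ≤ n → GameWinner {Srow n, L2}) ∧
    GameWinner {Srow 3, C2, Z2} :=
  ⟨S5.part1, fun n hn => S5.part2 n hn, S5.part3⟩
end

section
/- If the breaker follows the paving strategy based on a 2-paving R, then at every stage of the weak (1,2)-achievement game no two cells marked by the maker are related by R. -/
lemma stmt7_aux (R : Cell → Cell → Prop) (hR : TwoPaving R) (τ : BStrategy)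
    (hτ : PavingStrategy R τ) (σ : MStrategy) (hσ : MLegal σ) (n : ℕ) :
    (∀ a ∈ (play σ τ n).1, ∀ b ∈ (play σ τ n).1, ¬ R a b) ∧
    (∀ a ∈ (play σ τ n).1, ∀ c, R a c →
      c ∈ markedCells (play σ τ n).1 (play σ τ n).2) := by
  induction n with
  | zero => simp [play]
  | succ n ih =>
    obtain ⟨ih1, ih2⟩ := ih
    set ms := (play σ τ n).1 with hms
    set bs := (play σ τ n).2 with hbs
    set mv := σ ms bs with hmv
    have hplay : play σ τ (n+1) = (ms ++ [mv], bs ++ [τ (ms ++ [mv]) bs]) := rfl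
    have hmem : ∀ x, x ∈ (play σ τ (n+1)).1 ↔ x ∈ ms ∨ x = mv := by
      intro x; rw [hplay]; simp
    have hmvnew : mv ∉ markedCells ms bs := hσ ms bs
    have hmono : markedCells ms bs ⊆ markedCells (play σ τ (n+1)).1 (play σ τ (n+1)).2 := by
      intro c hc
      rw [hplay]
      rcases hc with h | ⟨p, hp, h⟩
      · exact Or.inl (by simp [List.mem_append, h])
      · exact Or.inr ⟨p, by simp [List.mem_append, hp], h⟩
    have hRmv : ∀ a ∈ ms, ¬ R a mv := by
      intro a ha hab
      exact hmvnew (ih2 a ha mv hab)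
    constructor
    · intro a ha b hb hab
      rw [hmem] at ha hb
      rcases ha with ha | ha <;> rcases hb with hb | hb
      · exact ih1 a ha b hb hab
      · subst hb; exact hRmv a ha hab
      · subst ha; exact hRmv b hb (hR.2.1 _ _ hab)
      · subst ha; subst hb; exact hR.1 _ hab
    · intro a ha c hac
      rw [hmem] at ha
      rcases ha with ha | ha
      · exact hmono (ih2 a ha c hac)
      · -- a = mv : use the paving strategy
        subst ha
        by_cases hc : c ∈ markedCells (ms ++ [mv]) bs
        · rw [hplay]
          rcases hc with h | ⟨p, hp, h⟩
          · exact Or.inl h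
          · exact Or.inr ⟨p, by simp [List.mem_append, hp], h⟩
        · have hlast : mv ∈ (ms ++ [mv]).getLast? := by
            rw [List.getLast?_concat]; exact rfl
          have := hτ.2 (ms ++ [mv]) bs mv hlast c hac hc
          rw [hplay]
          exact Or.inr ⟨τ (ms ++ [mv]) bs, by simp, this⟩

/-- if the breaker follows the paving strategy based on a 2-paving `R`,
then at every stage of the game no two cells marked by the maker are related by `R`. -/
theorem stmt7 (R : Cell → Cell → Prop) (hR : TwoPaving R) (τ : BStrategy)
    (hτ : PavingStrategy R τ) (σ : MStrategy) (hσ : MLegal σ) (n : ℕ) :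
    ∀ a ∈ makerSet σ τ n, ∀ b ∈ makerSet σ τ n, ¬ R a b :=
  (stmt7_aux R hR τ hτ σ hσ n).1
end
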